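/- arXiv:0807.4116 — 5 statements merged into one kernel-verified Lean document; each statement's English description precedes it below -/
import Mathlib

section
/- For $\chi_1, \chi_2 \in \Xi$, the following are equivalent: (a) there exist $\boldsymbol\pi_1, \boldsymbol\pi_2 \in \mathcal{P}$ with $\chi_i = \chi_{\boldsymbol\pi_i}$ and $\mathbf{r}(\boldsymbol\pi_1) = \mathbf{r}(\boldsymbol\pi_2)$; (b) $\sum_{\epsilon=0}^{m-1} \sigma^\epsilon \circ \chi_1 \circ \sigma^{-\epsilon} = \sum_{\epsilon=0}^{m-1} \sigma^\epsilon \circ \chi_2 \circ \sigma^{-\epsilon}$. -/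
open Polynomial

noncomputable section

variable {I I₀ : Type*}

/-- The weight of 𝛑 ∈ 𝒫 at the spectral parameter `a`: the `i`-th coordinate is the
multiplicity of `a⁻¹` as a root of the `i`-th component. -/
def wtAt (f : I → Polynomial ℂ) (a : ℂ) : I → ℕ := fun i => (f i).rootMultiplicity a⁻¹

open scoped Classical in
/-- The folded components λ(ε) ∈ P⁺_σ of a dominant weight λ ∈ P⁺, for the diagram
automorphism σ (a permutation of the index set I of simple roots) and a choice
ι : I₀ → I of representatives of the σ-orbits of I. -/
def lamComp (σ : Equiv.Perm I) (ι : I₀ → I) (lam : I → ℕ) (ε : ℕ) : I₀ → ℕ :=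
  fun j => if ε ≠ 0 ∧ σ (ι j) = ι j then 0 else lam ((σ ^ ε) (ι j))

open scoped Classical in
/-- The folding map 𝐫 : 𝒫 → 𝒫^σ, defined on a standard factorization
𝛑 = ∏ₖ 𝛑_{λₖ,aₖ} by 𝐫(𝛑) = ∏ₖ∏_ε 𝛑^σ_{λₖ(ε), ζ^ε aₖ}; at a node j fixed by σ the
spectral parameter is raised to the m-th power (the factor a^{(αᵢ,αᵢ)} of [CFS]). -/
def fold [Fintype I] (m : ℕ) (ζ : ℂ) (σ : Equiv.Perm I) (ι : I₀ → I)
    (f : I → Polynomial ℂ) : I₀ → Polynomial ℂ :=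
  fun j =>
    ∏ a ∈ ((∏ i, f i).roots.toFinset.image fun r => r⁻¹),
      ∏ ε ∈ Finset.range m,
        (1 - C ((ζ ^ ε * a) ^ (if σ (ι j) = ι j then m else 1)) * X) ^
          lamComp σ ι (wtAt f a) ε j

/-- The spectral character χ_𝛑 : ℂˣ → P/Q of 𝛑 ∈ 𝒫, where the weight lattice P is
presented as `I → ℤ` and Q ≤ P is the root lattice. -/
def chars (Q : AddSubgroup (I → ℤ)) (f : I → Polynomial ℂ) :
    ℂ → (I → ℤ) ⧸ Q :=
  fun a => QuotientAddGroup.mk (fun i => ((f i).rootMultiplicity a⁻¹ : ℤ))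

/-- The action of the diagram automorphism σ on the weight lattice P = (I → ℤ),
ω_i ↦ ω_{σ(i)}, as an additive endomorphism (here realized by precomposition). -/
def swEnd (σ : Equiv.Perm I) : (I → ℤ) →+ (I → ℤ) :=
  AddMonoidHom.mk' (fun v => fun i => v (σ i)) (fun _ _ => rfl)

/-- The induced action of σ on P/Q. -/
def sigmaBar (σ : Equiv.Perm I) (Q : AddSubgroup (I → ℤ))
    (h : Q ≤ Q.comap (swEnd σ)) : AddMonoid.End ((I → ℤ) ⧸ Q) :=
  QuotientAddGroup.map Q Q (swEnd σ) h


/- ======================= auxiliary lemmas ======================= -/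

lemma aux_factor_ne_zero (c : ℂ) : (1 - C c * X : Polynomial ℂ) ≠ 0 := by
  intro h
  have := congrArg (Polynomial.eval 0) h
  simp at this

lemma aux_rm_pow (w c : ℂ) (n : ℕ) :
    rootMultiplicity w ((1 - C c * X : Polynomial ℂ)^n) = if c * w = 1 then n else 0 := by
  by_cases h : c * w = 1
  · have hc : c ≠ 0 := by rintro rfl; simp at h
    have hcw : (C c * C w : Polynomial ℂ) = 1 := by rw [← C_mul, h, C_1]
    have hfac : (1 - C c * X : Polynomial ℂ) = C (-c) * (X - C w) := by
      simp only [map_neg]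
      linear_combination -hcw
    have h2 : (1 - C c * X : Polynomial ℂ)^n = C ((-c)^n) * (X - C w)^n := by
      rw [hfac, mul_pow, ← C_pow]
    rw [h2, if_pos h]
    have hC : (C ((-c)^n) : Polynomial ℂ) ≠ 0 := by
      simp [pow_ne_zero, hc]
    rw [rootMultiplicity_mul_X_sub_C_pow hC, rootMultiplicity_C, zero_add]
  · have hnr : ¬ IsRoot ((1 - C c * X : Polynomial ℂ)^n) w := by
      simp only [IsRoot, eval_pow, eval_sub, eval_one, eval_mul, eval_C, eval_X]
      exact pow_ne_zero n (sub_ne_zero.mpr fun hh => h hh.symm)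
    rw [rootMultiplicity_eq_zero hnr, if_neg h]

lemma aux_prod_factor_ne_zero {α : Type*} (s : Finset α) (c : α → ℂ) (n : α → ℕ) :
    (∏ k ∈ s, (1 - C (c k) * X : Polynomial ℂ)^(n k)) ≠ 0 := by
  intro h
  have : (∏ k ∈ s, (1 - C (c k) * X : Polynomial ℂ)^(n k)).eval 0 = 0 := by rw [h]; simp
  rw [eval_prod] at this
  simp at this

lemma aux_rm_prod {α : Type*} (s : Finset α) (c : α → ℂ) (n : α → ℕ) (w : ℂ) :
    rootMultiplicity w (∏ k ∈ s, (1 - C (c k) * X : Polynomial ℂ)^(n k))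
      = ∑ k ∈ s, if c k * w = 1 then n k else 0 := by
  classical
  induction s using Finset.induction with
  | empty => simp [rootMultiplicity_eq_zero (by simp [IsRoot] : ¬ IsRoot (1 : Polynomial ℂ) w)]
  | @insert a s' hk ih =>
    rw [Finset.prod_insert hk, Finset.sum_insert hk, ← ih, ← aux_rm_pow w (c a) (n a)]
    rw [rootMultiplicity_mul]
    exact mul_ne_zero (pow_ne_zero _ (aux_factor_ne_zero _)) (aux_prod_factor_ne_zero _ _ _)

lemma aux_poly_eq_of_rm (p q : Polynomial ℂ) (hp : p.eval 0 = 1) (hq : q.eval 0 = 1)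
    (h : ∀ w, rootMultiplicity w p = rootMultiplicity w q) : p = q := by
  classical
  have hroots : p.roots = q.roots := by
    apply Multiset.ext.mpr
    intro w
    rw [count_roots, count_roots, h w]
  have hpe := Splits.eq_prod_roots (IsAlgClosed.splits p)
  have hqe := Splits.eq_prod_roots (IsAlgClosed.splits q)
  have hA : eval 0 (Multiset.map (fun a => X - C a) p.roots).prod ≠ 0 := by
    rw [eval_multiset_prod]
    intro hz
    simp only [Multiset.map_map, Function.comp] at hz
    have h0 : (0:ℂ) ∈ Multiset.map (fun x => eval 0 (X - C x)) p.roots :=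
      Multiset.prod_eq_zero_iff.mp hz
    obtain ⟨a, ha, ha0⟩ := Multiset.mem_map.mp h0
    simp only [eval_sub, eval_X, eval_C, zero_sub, neg_eq_zero] at ha0
    subst ha0
    have : p.IsRoot 0 := isRoot_of_mem_roots ha
    simp [IsRoot, hp] at this
  have e1 := congrArg (eval 0) hpe
  rw [hp, eval_mul, eval_C] at e1
  have e2 := congrArg (eval 0) hqe
  rw [hq, eval_mul, eval_C, ← hroots] at e2
  have hlc : p.leadingCoeff = q.leadingCoeff := mul_right_cancel₀ hA (e1.symm.trans e2)
  rw [hpe, hqe, hroots, hlc]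

lemma aux_sum_range_shift {M : Type*} [AddCancelCommMonoid M] (m : ℕ) (δ : ℕ) (h : ℕ → M)
    (hp : ∀ t, h (t + m) = h t) :
    ∑ ε ∈ Finset.range m, h (ε + δ) = ∑ ε ∈ Finset.range m, h ε := by
  induction δ generalizing h with
  | zero => simp
  | succ d ih =>
    have step : ∑ ε ∈ Finset.range m, h (ε + 1) = ∑ ε ∈ Finset.range m, h ε := by
      have h1 : (∑ ε ∈ Finset.range m, h (ε + 1)) + h 0 = ∑ ε ∈ Finset.range (m+1), h ε :=
        (Finset.sum_range_succ' h m).symm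
      have h2 : ∑ ε ∈ Finset.range (m+1), h ε = (∑ ε ∈ Finset.range m, h ε) + h 0 := by
        rw [Finset.sum_range_succ]
        congr 1
        simpa using hp 0
      exact add_right_cancel (h1.trans h2)
    calc ∑ ε ∈ Finset.range m, h (ε + (d+1))
        = ∑ ε ∈ Finset.range m, (fun t => h (t + 1)) (ε + d) := by
          apply Finset.sum_congr rfl; intro ε _; simp only []; ring_nf
      _ = ∑ ε ∈ Finset.range m, h (ε + 1) := ih (fun t => h (t+1)) (fun t => by
          show h (t + m + 1) = h (t + 1)
          have := hp (t + 1)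
          ring_nf at this ⊢
          exact this)
      _ = ∑ ε ∈ Finset.range m, h ε := step

lemma aux_pow_mod_eq {G : Type*} [Monoid G] {m : ℕ} (g : G) (hg : g ^ m = 1) (k : ℕ) :
    g ^ k = g ^ (k % m) := by
  conv_lhs => rw [← Nat.div_add_mod k m]
  rw [pow_add, pow_mul, hg, one_pow, one_mul]

/-- twisted sum of a weight function -/
def Tgen {I : Type*} {M : Type*} [AddCommMonoid M] (m : ℕ) (ζ : ℂ) (σ : Equiv.Perm I)
    (W : ℂ → I → M) (z : ℂ) (i : I) : M :=
  ∑ ε ∈ Finset.range m, W ((ζ ^ ε)⁻¹ * z) ((σ ^ ε) i)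

section auxlemmas
variable {m : ℕ} {ζ : ℂ} {σ : Equiv.Perm I} {ι : I₀ → I}

lemma aux_Tgen_shift {M : Type*} [AddCancelCommMonoid M] (hm : 0 < m)
    (hζ : IsPrimitiveRoot ζ m)
    (hσm : σ ^ m = 1) (W : ℂ → I → M) (z : ℂ) (i : I) (δ : ℕ) :
    Tgen m ζ σ W z ((σ ^ δ) i) = Tgen m ζ σ W (ζ ^ δ * z) i := by
  have hζ0 : ζ ≠ 0 := hζ.ne_zero hm.ne'
  have key : ∀ t : ℕ, (fun t => W ((ζ ^ t)⁻¹ * (ζ ^ δ * z)) ((σ ^ t) i)) (t + m)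
      = (fun t => W ((ζ ^ t)⁻¹ * (ζ ^ δ * z)) ((σ ^ t) i)) t := by
    intro t
    simp only [pow_add, hζ.pow_eq_one, hσm, mul_one]
  have := aux_sum_range_shift m δ (fun t => W ((ζ ^ t)⁻¹ * (ζ ^ δ * z)) ((σ ^ t) i)) key
  rw [Tgen, Tgen, ← this]
  apply Finset.sum_congr rfl
  intro ε _
  congr 1
  · rw [pow_add, mul_inv]
    field_simp
  · rw [pow_add, Equiv.Perm.mul_apply]

lemma aux_fi_ne_zero {f : I → Polynomial ℂ} (hf : ∀ i, (f i).coeff 0 = 1) (i : I) :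
    f i ≠ 0 := by
  intro h; have := hf i; rw [h] at this; simp at this

lemma aux_wt_eq_zero_of_not_mem [Fintype I] {f : I → Polynomial ℂ}
    (hf : ∀ i, (f i).coeff 0 = 1) {a : ℂ}
    (hS : a ∉ ((∏ i, f i).roots.toFinset.image fun r => r⁻¹)) (i : I) : wtAt f a i = 0 := by
  by_contra h
  have hne : f i ≠ 0 := aux_fi_ne_zero hf i
  have hroot : (f i).IsRoot a⁻¹ :=
    (rootMultiplicity_pos hne).mp (Nat.pos_of_ne_zero h)
  have hprod : (∏ i, f i) ≠ 0 := Finset.prod_ne_zero_iff.mpr fun i _ => aux_fi_ne_zero hf i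
  have hr : (∏ i, f i).IsRoot a⁻¹ := by
    rw [IsRoot, eval_prod]
    exact Finset.prod_eq_zero (Finset.mem_univ i) hroot
  have hmem : a⁻¹ ∈ (∏ i, f i).roots.toFinset := by
    rw [Multiset.mem_toFinset, mem_roots hprod]; exact hr
  exact hS (Finset.mem_image.mpr ⟨a⁻¹, hmem, inv_inv a⟩)

lemma aux_rm_fold_fixed [Fintype I] (hm : 0 < m) (hζ : IsPrimitiveRoot ζ m)
    {f : I → Polynomial ℂ} (hf : ∀ i, (f i).coeff 0 = 1) {z : ℂ} (hz : z ≠ 0) {j : I₀}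
    (hfix : σ (ι j) = ι j) :
    rootMultiplicity ((z ^ m)⁻¹) (fold m ζ σ ι f j) = Tgen m ζ σ (wtAt f) z (ι j) := by
  classical
  have hζ0 : ζ ≠ 0 := hζ.ne_zero hm.ne'
  have : NeZero m := ⟨hm.ne'⟩
  set S := ((∏ i, f i).roots.toFinset.image fun r => r⁻¹) with hSdef
  have hσfix : ∀ ε : ℕ, (σ ^ ε) (ι j) = ι j := by
    intro ε; induction ε with
    | zero => rfl
    | succ d ih => rw [pow_succ, Equiv.Perm.mul_apply, hfix, ih]
  have hfold : fold m ζ σ ι f j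
      = ∏ k ∈ S ×ˢ Finset.range m,
          (1 - C ((ζ ^ k.2 * k.1) ^ m) * X) ^ (lamComp σ ι (wtAt f k.1) k.2 j) := by
    rw [fold, ← Finset.prod_product']
    exact Finset.prod_congr rfl fun a _ => by rw [if_pos hfix]
  rw [hfold, aux_rm_prod, Finset.sum_product]
  dsimp only
  have hstep : ∀ a ∈ S,
      (∑ ε ∈ Finset.range m, if (ζ ^ ε * a) ^ m * ((z ^ m)⁻¹) = 1
          then lamComp σ ι (wtAt f a) ε j else 0)
      = (if a ^ m = z ^ m then wtAt f a (ι j) else 0) := by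
    intro a _
    rw [Finset.sum_eq_single 0]
    · have h1 : lamComp σ ι (wtAt f a) 0 j = wtAt f a (ι j) := by
        simp [lamComp]
      rw [h1, pow_zero, one_mul]
      exact if_congr (mul_inv_eq_one₀ (pow_ne_zero m hz)) rfl rfl
    · intro ε _ hε
      have h2 : lamComp σ ι (wtAt f a) ε j = 0 := by
        simp [lamComp, hε, hfix]
      simp [h2]
    · intro h; exact absurd (Finset.mem_range.mpr hm) h
  rw [Finset.sum_congr rfl hstep]
  set E := (Finset.range m).image (fun ε => (ζ ^ ε)⁻¹ * z) with hE
  have hE0 : ∀ a ∈ E, a ≠ 0 := by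
    rintro a ha rfl
    obtain ⟨ε, -, h0⟩ := Finset.mem_image.mp ha
    exact (mul_ne_zero (inv_ne_zero (pow_ne_zero ε hζ0)) hz) h0
  have hmemE : ∀ a : ℂ, a ∈ E ↔ a ^ m = z ^ m := by
    intro a
    constructor
    · rintro haE
      obtain ⟨ε, -, rfl⟩ := Finset.mem_image.mp haE
      rw [mul_pow, inv_pow, ← pow_mul, mul_comm ε m, pow_mul, hζ.pow_eq_one, one_pow, inv_one,
        one_mul]
    · intro ha
      have ha0 : a ≠ 0 := by
        rintro rfl
        rw [zero_pow hm.ne'] at ha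
        exact pow_ne_zero m hz ha.symm
      have hq : (z / a) ^ m = 1 := by
        rw [div_pow, ha, div_self (pow_ne_zero m hz)]
      obtain ⟨ε, hεm, hεe⟩ := hζ.eq_pow_of_pow_eq_one hq
      refine Finset.mem_image.mpr ⟨ε, Finset.mem_range.mpr hεm, ?_⟩
      rw [hεe]
      field_simp
  have h3 : (∑ a ∈ S, if a ^ m = z ^ m then wtAt f a (ι j) else 0)
      = ∑ a ∈ S.filter (fun a => a ^ m = z ^ m), wtAt f a (ι j) :=
    (Finset.sum_filter _ _).symm
  have h4 : (∑ a ∈ S.filter (fun a => a ^ m = z ^ m), wtAt f a (ι j))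
      = ∑ a ∈ E, wtAt f a (ι j) := by
    apply Finset.sum_subset
    · intro a ha
      obtain ⟨-, h⟩ := Finset.mem_filter.mp ha
      exact (hmemE a).mpr h
    · intro a haE hnf
      have haS : a ∉ S := fun haS => hnf (Finset.mem_filter.mpr ⟨haS, (hmemE a).mp haE⟩)
      exact aux_wt_eq_zero_of_not_mem hf haS (ι j)
  have h5 : (∑ a ∈ E, wtAt f a (ι j))
      = ∑ ε ∈ Finset.range m, wtAt f ((ζ ^ ε)⁻¹ * z) (ι j) := by
    rw [hE]
    apply Finset.sum_image
    intro x hx y hy hxy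
    have : (ζ ^ x)⁻¹ = (ζ ^ y)⁻¹ := mul_right_cancel₀ hz hxy
    exact hζ.pow_inj (Finset.mem_range.mp hx) (Finset.mem_range.mp hy) (inv_inj.mp this)
  rw [h3, h4, h5, Tgen]
  exact Finset.sum_congr rfl fun ε _ => by rw [hσfix ε]

lemma aux_rm_fold_nonfixed [Fintype I] (hm : 0 < m) (hζ : IsPrimitiveRoot ζ m)
    {f : I → Polynomial ℂ} (hf : ∀ i, (f i).coeff 0 = 1) {z : ℂ} (hz : z ≠ 0) {j : I₀}
    (hfix : ¬ σ (ι j) = ι j) :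
    rootMultiplicity (z⁻¹) (fold m ζ σ ι f j) = Tgen m ζ σ (wtAt f) z (ι j) := by
  classical
  have hζ0 : ζ ≠ 0 := hζ.ne_zero hm.ne'
  set S := ((∏ i, f i).roots.toFinset.image fun r => r⁻¹) with hSdef
  have hfold : fold m ζ σ ι f j
      = ∏ k ∈ S ×ˢ Finset.range m,
          (1 - C (ζ ^ k.2 * k.1) * X) ^ (wtAt f k.1 ((σ ^ k.2) (ι j))) := by
    rw [fold, ← Finset.prod_product']
    exact Finset.prod_congr rfl fun a _ => by
      rw [if_neg hfix, pow_one, lamComp, if_neg (fun h => hfix h.2)]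
  rw [hfold, aux_rm_prod, Finset.sum_product]
  dsimp only
  rw [Finset.sum_comm]
  rw [Tgen]
  apply Finset.sum_congr rfl
  intro ε _
  have hcond : ∀ a : ℂ, (ζ ^ ε * a * z⁻¹ = 1) ↔ (a = (ζ ^ ε)⁻¹ * z) := by
    intro a
    rw [mul_inv_eq_one₀ hz, eq_inv_mul_iff_mul_eq₀ (pow_ne_zero ε hζ0)]
  have : (∑ a ∈ S, if ζ ^ ε * a * z⁻¹ = 1 then wtAt f a ((σ ^ ε) (ι j)) else 0)
      = ∑ a ∈ S, if a = (ζ ^ ε)⁻¹ * z then wtAt f a ((σ ^ ε) (ι j)) else 0 :=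
    Finset.sum_congr rfl fun a _ => by rw [if_congr (hcond a) rfl rfl]
  rw [this, Finset.sum_ite_eq' S ((ζ ^ ε)⁻¹ * z) (fun a => wtAt f a ((σ ^ ε) (ι j)))]
  by_cases hmem : (ζ ^ ε)⁻¹ * z ∈ S
  · rw [if_pos hmem]
  · rw [if_neg hmem, aux_wt_eq_zero_of_not_mem hf hmem]

lemma aux_fold_eval0 [Fintype I] (f : I → Polynomial ℂ) (j : I₀) :
    (fold m ζ σ ι f j).eval 0 = 1 := by
  simp [fold, eval_prod]

lemma aux_fold_eq_of_Tgen_eq [Fintype I] (hm : 0 < m) (hζ : IsPrimitiveRoot ζ m)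
    {f₁ f₂ : I → Polynomial ℂ} (hf₁ : ∀ i, (f₁ i).coeff 0 = 1) (hf₂ : ∀ i, (f₂ i).coeff 0 = 1)
    (hT : ∀ z i, Tgen m ζ σ (wtAt f₁) z i = Tgen m ζ σ (wtAt f₂) z i) :
    fold m ζ σ ι f₁ = fold m ζ σ ι f₂ := by
  funext j
  apply aux_poly_eq_of_rm _ _ (aux_fold_eval0 f₁ j) (aux_fold_eval0 f₂ j)
  intro w
  by_cases hw : w = 0
  · subst hw
    rw [rootMultiplicity_eq_zero, rootMultiplicity_eq_zero]
    · rw [IsRoot, aux_fold_eval0]; exact one_ne_zero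
    · rw [IsRoot, aux_fold_eval0]; exact one_ne_zero
  by_cases hfix : σ (ι j) = ι j
  · obtain ⟨y, hy⟩ := IsAlgClosed.exists_pow_nat_eq (k := ℂ) w⁻¹ hm
    have hy0 : y ≠ 0 := by
      rintro rfl
      rw [zero_pow hm.ne'] at hy
      exact inv_ne_zero hw hy.symm
    have hwy : w = (y ^ m)⁻¹ := by rw [hy, inv_inv]
    rw [hwy, aux_rm_fold_fixed hm hζ hf₁ hy0 hfix, aux_rm_fold_fixed hm hζ hf₂ hy0 hfix, hT]
  · have hwz : w = (w⁻¹)⁻¹ := (inv_inv w).symm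
    rw [hwz, aux_rm_fold_nonfixed hm hζ hf₁ (inv_ne_zero hw) hfix,
      aux_rm_fold_nonfixed hm hζ hf₂ (inv_ne_zero hw) hfix, hT]

lemma aux_Tgen_eq_of_fold_eq [Fintype I] (hm : 0 < m) (hζ : IsPrimitiveRoot ζ m)
    (hσm : σ ^ m = 1)
    (horb : ∀ i : I, ∃ (j : I₀) (ε : ℕ), i = (σ ^ ε) (ι j))
    {f₁ f₂ : I → Polynomial ℂ} (hf₁ : ∀ i, (f₁ i).coeff 0 = 1) (hf₂ : ∀ i, (f₂ i).coeff 0 = 1)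
    (hfold : fold m ζ σ ι f₁ = fold m ζ σ ι f₂) :
    ∀ z i, Tgen m ζ σ (wtAt f₁) z i = Tgen m ζ σ (wtAt f₂) z i := by
  intro z i
  have hζ0 : ζ ≠ 0 := hζ.ne_zero hm.ne'
  by_cases hz : z = 0
  · subst hz
    have h0 : ∀ f : I → Polynomial ℂ, (∀ i', (f i').coeff 0 = 1) →
        ∀ i', Tgen m ζ σ (wtAt f) 0 i' = 0 := by
      intro f hf i'
      rw [Tgen]
      apply Finset.sum_eq_zero
      intro ε _
      have h1 : wtAt f ((ζ ^ ε)⁻¹ * 0) = wtAt f 0 := by rw [mul_zero]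
      rw [h1, wtAt]
      rw [rootMultiplicity_eq_zero]
      rw [IsRoot, inv_zero, ← coeff_zero_eq_eval_zero, hf]
      exact one_ne_zero
    rw [h0 f₁ hf₁, h0 f₂ hf₂]
  · obtain ⟨j, δ', hi⟩ := horb i
    set δ := δ' % m with hδ
    have hσδ : (σ ^ δ') (ι j) = (σ ^ δ) (ι j) := by
      rw [aux_pow_mod_eq σ hσm δ']
    rw [hi, hσδ, aux_Tgen_shift hm hζ hσm, aux_Tgen_shift hm hζ hσm]
    have hzζ : ζ ^ δ * z ≠ 0 := mul_ne_zero (pow_ne_zero δ hζ0) hz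
    by_cases hfix : σ (ι j) = ι j
    · rw [← aux_rm_fold_fixed hm hζ hf₁ hzζ hfix, ← aux_rm_fold_fixed hm hζ hf₂ hzζ hfix,
        hfold]
    · rw [← aux_rm_fold_nonfixed hm hζ hf₁ hzζ hfix,
        ← aux_rm_fold_nonfixed hm hζ hf₂ hzζ hfix, hfold]

end auxlemmas

section quotlemmas
variable {m : ℕ} {ζ : ℂ} {σ : Equiv.Perm I} {Q : AddSubgroup (I → ℤ)}
  {hQσ : Q ≤ Q.comap (swEnd σ)}

lemma aux_sigmaBar_pow_mk (ε : ℕ) (v : I → ℤ) :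
    (sigmaBar σ Q hQσ ^ ε) (QuotientAddGroup.mk v)
      = QuotientAddGroup.mk (fun i => v ((σ ^ ε) i)) := by
  induction ε generalizing v with
  | zero => simp [AddMonoid.End.one_apply]
  | succ d ih =>
    have h1 : (sigmaBar σ Q hQσ) (QuotientAddGroup.mk v)
        = QuotientAddGroup.mk (fun i => v (σ i)) := by
      rw [sigmaBar]
      exact QuotientAddGroup.map_mk Q Q (swEnd σ) hQσ v
    rw [pow_succ]
    have h2 : (sigmaBar σ Q hQσ ^ d * sigmaBar σ Q hQσ) (QuotientAddGroup.mk v)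
        = (sigmaBar σ Q hQσ ^ d) ((sigmaBar σ Q hQσ) (QuotientAddGroup.mk v)) := rfl
    rw [h2, h1, ih]
    congr 1
    funext i
    rw [pow_succ', Equiv.Perm.mul_apply]

lemma aux_char_sum_gen (v : ℂ → I → ℤ) (χ : ℂ → (I → ℤ) ⧸ Q)
    (hχ : ∀ a, (QuotientAddGroup.mk (v a) : (I → ℤ) ⧸ Q) = χ a) (z : ℂ) :
    (∑ ε ∈ Finset.range m, (sigmaBar σ Q hQσ ^ ε) (χ ((ζ ^ ε)⁻¹ * z)))
      = QuotientAddGroup.mk (fun i => Tgen m ζ σ v z i) := by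
  have h1 : ∀ ε ∈ Finset.range m, (sigmaBar σ Q hQσ ^ ε) (χ ((ζ ^ ε)⁻¹ * z))
      = QuotientAddGroup.mk (fun i => v ((ζ ^ ε)⁻¹ * z) ((σ ^ ε) i)) := by
    intro ε _
    rw [← hχ, aux_sigmaBar_pow_mk]
  rw [Finset.sum_congr rfl h1]
  have h2 := map_sum (QuotientAddGroup.mk' Q)
    (fun ε => (fun i => v ((ζ ^ ε)⁻¹ * z) ((σ ^ ε) i))) (Finset.range m)
  have h3 : ∀ w : I → ℤ, QuotientAddGroup.mk' Q w = QuotientAddGroup.mk w := fun _ => rfl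
  simp only [h3] at h2
  rw [← h2]
  congr 1
  funext i
  rw [Finset.sum_apply]
  rfl

end quotlemmas

def polyOf {I : Type*} (s : Finset ℂ) (w : ℂ → I → ℤ) : I → Polynomial ℂ :=
  fun i => ∏ z ∈ s, (1 - C z * X)^((w z i).toNat)

lemma aux_polyOf_coeff0 (s : Finset ℂ) (w : ℂ → I → ℤ) (i : I) :
    (polyOf s w i).coeff 0 = 1 := by
  rw [coeff_zero_eq_eval_zero, polyOf, eval_prod]
  simp

lemma aux_wtAt_polyOf (s : Finset ℂ) (w : ℂ → I → ℤ)
    (hs : ∀ z : ℂ, w z ≠ 0 → z ∈ s) (hw0 : w 0 = 0)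
    (hnn : ∀ z i, 0 ≤ w z i) (a : ℂ) (i : I) :
    ((wtAt (polyOf s w) a i : ℤ)) = w a i := by
  classical
  rw [wtAt, polyOf, aux_rm_prod]
  by_cases ha : a = 0
  · subst ha
    rw [Finset.sum_eq_zero, hw0]
    · simp
    · intro z hzs
      rw [if_neg]
      rw [inv_zero, mul_zero]
      exact zero_ne_one
  · have hcond : ∀ z : ℂ, (z * a⁻¹ = 1) ↔ (z = a) := fun z => mul_inv_eq_one₀ ha
    rw [Finset.sum_congr rfl (fun z _ => if_congr (hcond z) rfl rfl)]
    rw [Finset.sum_ite_eq' s a (fun z => (w z i).toNat)]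
    by_cases hmem : a ∈ s
    · rw [if_pos hmem, Int.toNat_of_nonneg (hnn a i)]
    · rw [if_neg hmem]
      have : w a = 0 := by
        by_contra hne
        exact hmem (hs a hne)
      rw [this]
      simp

/-- for χ₁, χ₂ ∈ Ξ the following are equivalent: (a) there exist
𝛑₁, 𝛑₂ ∈ 𝒫 with χᵢ = χ_{𝛑ᵢ} and 𝐫(𝛑₁) = 𝐫(𝛑₂); (b)
Σ_{ε=0}^{m-1} σ^ε ∘ χ₁ ∘ σ^{-ε} = Σ_{ε=0}^{m-1} σ^ε ∘ χ₂ ∘ σ^{-ε}. -/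
theorem stmt6 {I I₀ : Type*} [Fintype I]
    (m : ℕ) (hm : 0 < m) (ζ : ℂ) (hζ : IsPrimitiveRoot ζ m)
    (σ : Equiv.Perm I) (hσm : σ ^ m = 1)
    (ι : I₀ → I) (hinj : Function.Injective ι)
    (horb : ∀ i : I, ∃ (j : I₀) (ε : ℕ), i = (σ ^ ε) (ι j))
    (hsep : ∀ (j j' : I₀) (ε : ℕ), (σ ^ ε) (ι j) = ι j' → j = j')
    (Q : AddSubgroup (I → ℤ)) (hQσ : Q ≤ Q.comap (swEnd σ))
    (hrep : ∀ c : (I → ℤ) ⧸ Q, ∃ v : I → ℤ, (∀ i, 0 ≤ v i) ∧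
        (QuotientAddGroup.mk v : (I → ℤ) ⧸ Q) = c)
    (χ₁ χ₂ : ℂ → (I → ℤ) ⧸ Q)
    (hχ₁ : (Function.support χ₁).Finite) (hχ₂ : (Function.support χ₂).Finite)
    (hχ₁0 : χ₁ 0 = 0) (hχ₂0 : χ₂ 0 = 0) :
    (∃ f₁ f₂ : I → Polynomial ℂ,
        (∀ i, (f₁ i).coeff 0 = 1) ∧ (∀ i, (f₂ i).coeff 0 = 1) ∧
        chars Q f₁ = χ₁ ∧ chars Q f₂ = χ₂ ∧
        fold m ζ σ ι f₁ = fold m ζ σ ι f₂) ↔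
    (fun z : ℂ => ∑ ε ∈ Finset.range m, (sigmaBar σ Q hQσ ^ ε) (χ₁ ((ζ ^ ε)⁻¹ * z)))
      = fun z : ℂ => ∑ ε ∈ Finset.range m, (sigmaBar σ Q hQσ ^ ε) (χ₂ ((ζ ^ ε)⁻¹ * z)) := by
  have hNZ : NeZero m := ⟨hm.ne'⟩
  have hζ0 : ζ ≠ 0 := hζ.ne_zero hm.ne'
  constructor
  · rintro ⟨f₁, f₂, hc₁, hc₂, hch₁, hch₂, hfoldEq⟩
    funext z
    have hb₁ := aux_char_sum_gen (hQσ := hQσ) (m := m) (ζ := ζ)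
        (fun a i => (wtAt f₁ a i : ℤ)) χ₁ (fun a => by rw [← hch₁]; rfl) z
    have hb₂ := aux_char_sum_gen (hQσ := hQσ) (m := m) (ζ := ζ)
        (fun a i => (wtAt f₂ a i : ℤ)) χ₂ (fun a => by rw [← hch₂]; rfl) z
    rw [hb₁, hb₂]
    have hT := aux_Tgen_eq_of_fold_eq hm hζ hσm horb hc₁ hc₂ hfoldEq
    congr 1
    funext i
    have c₁ : Tgen m ζ σ (fun a i => (wtAt f₁ a i : ℤ)) z i
        = ((Tgen m ζ σ (wtAt f₁) z i : ℕ) : ℤ) := by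
      rw [Tgen, Tgen]; push_cast; rfl
    have c₂ : Tgen m ζ σ (fun a i => (wtAt f₂ a i : ℤ)) z i
        = ((Tgen m ζ σ (wtAt f₂) z i : ℕ) : ℤ) := by
      rw [Tgen, Tgen]; push_cast; rfl
    rw [c₁, c₂, hT]
  · intro h
    classical
    -- ζ-orbit equivalence relation on ℂ
    have hrel_symm : ∀ {x y : ℂ}, (∃ k : ℕ, y = ζ ^ k * x) → (∃ k : ℕ, x = ζ ^ k * y) := by
      rintro x y ⟨k, rfl⟩
      refine ⟨m - k % m, ?_⟩
      rw [← mul_assoc, ← pow_add]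
      have harith : m - k % m + k = m + m * (k / m) := by
        have h1 := Nat.div_add_mod k m
        have h2 : k % m < m := Nat.mod_lt _ hm
        omega
      rw [harith, pow_add, pow_mul, hζ.pow_eq_one, one_pow, mul_one, one_mul]
    let St : Setoid ℂ := ⟨fun x y => ∃ k : ℕ, y = ζ ^ k * x,
      ⟨fun x => ⟨0, by simp⟩, fun {x y} hxy => hrel_symm hxy,
        fun {x y z'} hxy hyz => by
          obtain ⟨k, rfl⟩ := hxy
          obtain ⟨l, rfl⟩ := hyz
          exact ⟨l + k, by rw [pow_add]; ring⟩⟩⟩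
    set rep : ℂ → ℂ := fun z => (Quotient.mk St z).out with hrepdef
    have hrep_r : ∀ z : ℂ, ∃ k : ℕ, z = ζ ^ k * rep z := by
      intro z
      exact Quotient.exact (Quotient.out_eq (Quotient.mk St z))
    have hrep_inv : ∀ (z : ℂ) (ε : ℕ), rep ((ζ ^ ε)⁻¹ * z) = rep z := by
      intro z ε
      have hq : Quotient.mk St ((ζ ^ ε)⁻¹ * z) = Quotient.mk St z := by
        apply Quotient.sound
        show ∃ k : ℕ, z = ζ ^ k * ((ζ ^ ε)⁻¹ * z)
        exact ⟨ε, by field_simp⟩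
      simp only [hrepdef]
      simp only [hq]
    -- choice of nonnegative representatives
    choose Rv hRnn hRmk using hrep
    set v₁ : ℂ → I → ℤ := fun z => if χ₁ z = 0 then 0 else Rv (χ₁ z) with hv₁def
    set v₂ : ℂ → I → ℤ := fun z => if χ₂ z = 0 then 0 else Rv (χ₂ z) with hv₂def
    have hv₁mk : ∀ a, (QuotientAddGroup.mk (v₁ a) : (I → ℤ) ⧸ Q) = χ₁ a := by
      intro a
      simp only [hv₁def]
      by_cases ha : χ₁ a = 0
      · rw [if_pos ha, ha]; rfl
      · rw [if_neg ha]; exact hRmk _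
    have hv₂mk : ∀ a, (QuotientAddGroup.mk (v₂ a) : (I → ℤ) ⧸ Q) = χ₂ a := by
      intro a
      simp only [hv₂def]
      by_cases ha : χ₂ a = 0
      · rw [if_pos ha, ha]; rfl
      · rw [if_neg ha]; exact hRmk _
    have hv₁nn : ∀ z i, 0 ≤ v₁ z i := by
      intro z i
      simp only [hv₁def]
      by_cases ha : χ₁ z = 0
      · rw [if_pos ha]; exact le_refl 0
      · rw [if_neg ha]; exact hRnn _ i
    have hv₂nn : ∀ z i, 0 ≤ v₂ z i := by
      intro z i
      simp only [hv₂def]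
      by_cases ha : χ₂ z = 0
      · rw [if_pos ha]; exact le_refl 0
      · rw [if_neg ha]; exact hRnn _ i
    have hv₁0 : v₁ 0 = 0 := by simp only [hv₁def]; simp [hχ₁0]
    have hv₂0 : v₂ 0 = 0 := by simp only [hv₂def]; simp [hχ₂0]
    have hv₁supp : ∀ z, v₁ z ≠ 0 → χ₁ z ≠ 0 := by
      intro z hv ha
      apply hv
      simp only [hv₁def, if_pos ha]
    have hv₂supp : ∀ z, v₂ z ≠ 0 → χ₂ z ≠ 0 := by
      intro z hv ha
      apply hv
      simp only [hv₂def, if_pos ha]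
    -- the defect
    set d : ℂ → I → ℤ := fun z i => Tgen m ζ σ v₁ z i - Tgen m ζ σ v₂ z i with hddef
    have hdQ : ∀ z, d z ∈ Q := by
      intro z
      have e₁ := aux_char_sum_gen (m := m) (ζ := ζ) (hQσ := hQσ) v₁ χ₁ hv₁mk z
      have e₂ := aux_char_sum_gen (m := m) (ζ := ζ) (hQσ := hQσ) v₂ χ₂ hv₂mk z
      have hz := congrFun h z
      rw [e₁, e₂] at hz
      have hsub := QuotientAddGroup.eq_iff_sub_mem.mp hz
      have : d z = (fun i => Tgen m ζ σ v₁ z i) - (fun i => Tgen m ζ σ v₂ z i) := rfl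
      rw [this]
      exact hsub
    have hTv0 : ∀ (v : ℂ → I → ℤ), v 0 = 0 → ∀ i, Tgen m ζ σ v 0 i = 0 := by
      intro v hv i
      rw [Tgen]
      apply Finset.sum_eq_zero
      intro ε _
      rw [mul_zero, hv]
      rfl
    have hd0 : d 0 = 0 := by
      funext i
      simp only [hddef]
      show Tgen m ζ σ v₁ 0 i - Tgen m ζ σ v₂ 0 i = (0 : I → ℤ) i
      rw [hTv0 v₁ hv₁0, hTv0 v₂ hv₂0]
      rfl
    have hdshift : ∀ (z : ℂ) (δ : ℕ) (i : I), d (ζ ^ δ * z) i = d z ((σ ^ δ) i) := by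
      intro z δ i
      simp only [hddef]
      show Tgen m ζ σ v₁ (ζ ^ δ * z) i - Tgen m ζ σ v₂ (ζ ^ δ * z) i = _
      rw [← aux_Tgen_shift hm hζ hσm v₁, ← aux_Tgen_shift hm hζ hσm v₂]
    -- corrections
    set uu : (I → ℤ) → (I → ℤ) := fun dd i => max 0 (-(dd i)) with huudef
    set q₁ : (I → ℤ) → (I → ℤ) := fun dd =>
      if dd = 0 then 0 else Rv (QuotientAddGroup.mk (-(uu dd))) + uu dd with hq₁def
    set q₂ : (I → ℤ) → (I → ℤ) := fun dd => if dd = 0 then 0 else q₁ dd + dd with hq₂def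
    have hq₁0 : q₁ 0 = 0 := by simp only [hq₁def]; simp
    have hq₂0 : q₂ 0 = 0 := by simp only [hq₂def]; simp
    have hq₁Q : ∀ dd, q₁ dd ∈ Q := by
      intro dd
      simp only [hq₁def]
      by_cases hdd : dd = 0
      · rw [if_pos hdd]; exact Q.zero_mem
      · rw [if_neg hdd]
        have hmem := QuotientAddGroup.eq_iff_sub_mem.mp
          (hRmk (QuotientAddGroup.mk (-(uu dd))))
        have heq : Rv (QuotientAddGroup.mk (-(uu dd))) + uu dd
            = Rv (QuotientAddGroup.mk (-(uu dd))) - (-(uu dd)) := by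
          rw [sub_neg_eq_add]
        rw [heq]
        exact hmem
    have hq₂Q : ∀ dd, dd ∈ Q → q₂ dd ∈ Q := by
      intro dd hddQ
      simp only [hq₂def]
      by_cases hdd : dd = 0
      · rw [if_pos hdd]; exact Q.zero_mem
      · rw [if_neg hdd]
        exact Q.add_mem (hq₁Q dd) hddQ
    have hq₁nn : ∀ dd i, 0 ≤ q₁ dd i := by
      intro dd i
      simp only [hq₁def]
      by_cases hdd : dd = 0
      · rw [if_pos hdd]; exact le_refl 0
      · rw [if_neg hdd]
        have h1 := hRnn (QuotientAddGroup.mk (-(uu dd))) i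
        have h2 : (0:ℤ) ≤ uu dd i := by simp only [huudef]; exact le_max_left 0 _
        exact add_nonneg h1 h2
    have hq₂nn : ∀ dd i, 0 ≤ q₂ dd i := by
      intro dd i
      simp only [hq₂def]
      by_cases hdd : dd = 0
      · rw [if_pos hdd]; exact le_refl 0
      · rw [if_neg hdd]
        show (0:ℤ) ≤ q₁ dd i + dd i
        have h1 : uu dd i ≤ q₁ dd i := by
          simp only [hq₁def, if_neg hdd]
          have := hRnn (QuotientAddGroup.mk (-(uu dd))) i
          show uu dd i ≤ Rv (QuotientAddGroup.mk (-(uu dd))) i + uu dd i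
          omega
        have h2 : -(dd i) ≤ uu dd i := by simp only [huudef]; exact le_max_right 0 _
        omega
    have hq12 : ∀ dd, q₁ dd - q₂ dd = -dd := by
      intro dd
      by_cases hdd : dd = 0
      · rw [hdd, hq₁0, hq₂0]; simp
      · simp only [hq₂def, if_neg hdd]
        abel
    -- adjusted weights
    set w₁ : ℂ → I → ℤ := fun z => v₁ z + (if rep z = z then q₁ (d z) else 0) with hw₁def
    set w₂ : ℂ → I → ℤ := fun z => v₂ z + (if rep z = z then q₂ (d z) else 0) with hw₂def
    have hw₁0 : w₁ 0 = 0 := by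
      simp only [hw₁def]
      show v₁ 0 + (if rep 0 = 0 then q₁ (d 0) else 0) = 0
      rw [hv₁0, hd0, hq₁0, zero_add, ite_self]
    have hw₂0 : w₂ 0 = 0 := by
      simp only [hw₂def]
      show v₂ 0 + (if rep 0 = 0 then q₂ (d 0) else 0) = 0
      rw [hv₂0, hd0, hq₂0, zero_add, ite_self]
    have hw₁nn : ∀ z i, 0 ≤ w₁ z i := by
      intro z i
      simp only [hw₁def]
      show 0 ≤ v₁ z i + (if rep z = z then q₁ (d z) else 0) i
      by_cases hc : rep z = z
      · rw [if_pos hc]; exact add_nonneg (hv₁nn z i) (hq₁nn _ i)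
      · rw [if_neg hc]; simpa using hv₁nn z i
    have hw₂nn : ∀ z i, 0 ≤ w₂ z i := by
      intro z i
      simp only [hw₂def]
      show 0 ≤ v₂ z i + (if rep z = z then q₂ (d z) else 0) i
      by_cases hc : rep z = z
      · rw [if_pos hc]; exact add_nonneg (hv₂nn z i) (hq₂nn _ i)
      · rw [if_neg hc]; simpa using hv₂nn z i
    -- the twisted sums of w₁ and w₂ agree
    have hTw : ∀ (z : ℂ) (i : I), Tgen m ζ σ w₁ z i = Tgen m ζ σ w₂ z i := by
      intro z i
      by_cases hz : z = 0
      · subst hz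
        rw [hTv0 w₁ hw₁0, hTv0 w₂ hw₂0]
      obtain ⟨k, hk⟩ := hrep_r z
      set δ := k % m with hδdef
      have hδm : δ < m := Nat.mod_lt _ hm
      have hzδ : z = ζ ^ δ * rep z := by
        conv_lhs => rw [hk, aux_pow_mod_eq ζ hζ.pow_eq_one k]
      have hrz0 : rep z ≠ 0 := by
        intro h0
        rw [h0, mul_zero] at hzδ
        exact hz hzδ
      have hcorr : ∀ (qf : (I → ℤ) → (I → ℤ)),
          (∑ ε ∈ Finset.range m,
            (if rep ((ζ ^ ε)⁻¹ * z) = (ζ ^ ε)⁻¹ * z then qf (d ((ζ ^ ε)⁻¹ * z)) else 0)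
              ((σ ^ ε) i))
          = qf (d (rep z)) ((σ ^ δ) i) := by
        intro qf
        have hterm : ∀ ε ∈ Finset.range m,
            (if rep ((ζ ^ ε)⁻¹ * z) = (ζ ^ ε)⁻¹ * z then qf (d ((ζ ^ ε)⁻¹ * z)) else 0)
              ((σ ^ ε) i)
            = if ε = δ then qf (d (rep z)) ((σ ^ δ) i) else 0 := by
          intro ε hε
          rw [hrep_inv z ε]
          by_cases heq : rep z = (ζ ^ ε)⁻¹ * z
          · have h1 : z = ζ ^ ε * rep z := by
              rw [heq, ← mul_assoc, mul_inv_cancel₀ (pow_ne_zero ε hζ0), one_mul]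
            have hεδ : ε = δ :=
              hζ.pow_inj (Finset.mem_range.mp hε) hδm
                (mul_right_cancel₀ hrz0 (h1.symm.trans hzδ))
            rw [if_pos heq, if_pos hεδ, ← heq, hεδ]
          · rw [if_neg heq, if_neg]
            · rfl
            · intro hεδ
              apply heq
              rw [hεδ]
              conv_rhs => rw [hzδ, ← mul_assoc, inv_mul_cancel₀ (pow_ne_zero δ hζ0), one_mul]
        rw [Finset.sum_congr rfl hterm]
        rw [Finset.sum_ite_eq' (Finset.range m) δ (fun _ => qf (d (rep z)) ((σ ^ δ) i))]
        rw [if_pos (Finset.mem_range.mpr hδm)]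
      have hexp : ∀ (v qpick : ℂ → I → ℤ),
          Tgen m ζ σ (fun z' => v z' + qpick z') z i
            = Tgen m ζ σ v z i + ∑ ε ∈ Finset.range m, qpick ((ζ ^ ε)⁻¹ * z) ((σ ^ ε) i) := by
        intro v qpick
        rw [Tgen, Tgen, ← Finset.sum_add_distrib]
        rfl
      have e₁ : Tgen m ζ σ w₁ z i = Tgen m ζ σ v₁ z i + q₁ (d (rep z)) ((σ ^ δ) i) := by
        simp only [hw₁def]
        rw [hexp v₁ (fun z' => if rep z' = z' then q₁ (d z') else 0)]
        rw [hcorr q₁]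
      have e₂ : Tgen m ζ σ w₂ z i = Tgen m ζ σ v₂ z i + q₂ (d (rep z)) ((σ ^ δ) i) := by
        simp only [hw₂def]
        rw [hexp v₂ (fun z' => if rep z' = z' then q₂ (d z') else 0)]
        rw [hcorr q₂]
      rw [e₁, e₂]
      have hdz : d z i = d (rep z) ((σ ^ δ) i) := by
        conv_lhs => rw [hzδ]
        exact hdshift (rep z) δ i
      have hq := congrFun (hq12 (d (rep z))) ((σ ^ δ) i)
      simp only [Pi.sub_apply, Pi.neg_apply] at hq
      have hd' : d z i = Tgen m ζ σ v₁ z i - Tgen m ζ σ v₂ z i := rfl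
      have hd'' : d (rep z) ((σ ^ δ) i)
          = Tgen m ζ σ v₁ (rep z) ((σ ^ δ) i) - Tgen m ζ σ v₂ (rep z) ((σ ^ δ) i) := rfl
      omega
    -- finiteness of supports
    have hdfin : {z : ℂ | d z ≠ 0}.Finite := by
      have hfin : (⋃ ε ∈ Finset.range m, (fun a => ζ ^ ε * a) ''
          (Function.support χ₁ ∪ Function.support χ₂)).Finite :=
        Set.Finite.biUnion (Finset.range m).finite_toSet
          (fun ε _ => ((hχ₁.union hχ₂).image _))
      apply hfin.subset
      intro z hdz
      rw [Set.mem_setOf_eq] at hdz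
      have hex : ∃ i, d z i ≠ 0 := by
        by_contra hno
        push_neg at hno
        exact hdz (funext fun i => hno i)
      obtain ⟨i, hi⟩ := hex
      have hex2 : ∃ ε ∈ Finset.range m, v₁ ((ζ ^ ε)⁻¹ * z) ≠ 0 ∨ v₂ ((ζ ^ ε)⁻¹ * z) ≠ 0 := by
        by_contra hno
        push_neg at hno
        apply hi
        have z₁ : Tgen m ζ σ v₁ z i = 0 :=
          Finset.sum_eq_zero (fun ε hε => by rw [(hno ε hε).1]; rfl)
        have z₂ : Tgen m ζ σ v₂ z i = 0 :=
          Finset.sum_eq_zero (fun ε hε => by rw [(hno ε hε).2]; rfl)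
        show Tgen m ζ σ v₁ z i - Tgen m ζ σ v₂ z i = 0
        rw [z₁, z₂, sub_zero]
      obtain ⟨ε, hε, hv⟩ := hex2
      apply Set.mem_biUnion hε
      refine ⟨(ζ ^ ε)⁻¹ * z, ?_, by field_simp⟩
      rcases hv with hv | hv
      · exact Set.mem_union_left _ (Function.mem_support.mpr (hv₁supp _ hv))
      · exact Set.mem_union_right _ (Function.mem_support.mpr (hv₂supp _ hv))
    have hw₁fin : (Function.support w₁).Finite := by
      apply (hχ₁.union hdfin).subset
      intro z hzw
      rw [Function.mem_support] at hzw
      by_cases hv : v₁ z = 0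
      · right
        rw [Set.mem_setOf_eq]
        intro hdz
        apply hzw
        simp only [hw₁def]
        show v₁ z + (if rep z = z then q₁ (d z) else 0) = 0
        rw [hv, hdz, hq₁0, ite_self, zero_add]
      · exact Set.mem_union_left _ (Function.mem_support.mpr (hv₁supp _ hv))
    have hw₂fin : (Function.support w₂).Finite := by
      apply (hχ₂.union hdfin).subset
      intro z hzw
      rw [Function.mem_support] at hzw
      by_cases hv : v₂ z = 0
      · right
        rw [Set.mem_setOf_eq]
        intro hdz
        apply hzw
        simp only [hw₂def]
        show v₂ z + (if rep z = z then q₂ (d z) else 0) = 0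
        rw [hv, hdz, hq₂0, ite_self, zero_add]
      · exact Set.mem_union_left _ (Function.mem_support.mpr (hv₂supp _ hv))
    set s₁ : Finset ℂ := hw₁fin.toFinset with hs₁def
    set s₂ : Finset ℂ := hw₂fin.toFinset with hs₂def
    have hs₁ : ∀ z : ℂ, w₁ z ≠ 0 → z ∈ s₁ := by
      intro z hz
      rw [hs₁def, Set.Finite.mem_toFinset]
      exact hz
    have hs₂ : ∀ z : ℂ, w₂ z ≠ 0 → z ∈ s₂ := by
      intro z hz
      rw [hs₂def, Set.Finite.mem_toFinset]
      exact hz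
    have hpc₁ : ∀ i, ((polyOf s₁ w₁ i).coeff 0) = 1 := fun i => aux_polyOf_coeff0 s₁ w₁ i
    have hpc₂ : ∀ i, ((polyOf s₂ w₂ i).coeff 0) = 1 := fun i => aux_polyOf_coeff0 s₂ w₂ i
    refine ⟨polyOf s₁ w₁, polyOf s₂ w₂, hpc₁, hpc₂, ?_, ?_, ?_⟩
    · -- chars = χ₁
      funext a
      show (QuotientAddGroup.mk (fun i => ((wtAt (polyOf s₁ w₁) a i : ℤ))) : (I → ℤ) ⧸ Q)
        = χ₁ a
      have hwa : (fun i => ((wtAt (polyOf s₁ w₁) a i : ℤ))) = w₁ a :=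
        funext fun i => aux_wtAt_polyOf s₁ w₁ hs₁ hw₁0 hw₁nn a i
      rw [hwa]
      have hcQ : (if rep a = a then q₁ (d a) else 0) ∈ Q := by
        by_cases hc : rep a = a
        · rw [if_pos hc]; exact hq₁Q (d a)
        · rw [if_neg hc]; exact Q.zero_mem
      have hmkeq : (QuotientAddGroup.mk (w₁ a) : (I → ℤ) ⧸ Q) = QuotientAddGroup.mk (v₁ a) := by
        apply QuotientAddGroup.eq_iff_sub_mem.mpr
        have hsub : w₁ a - v₁ a = (if rep a = a then q₁ (d a) else 0) := by
          simp only [hw₁def]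
          show v₁ a + (if rep a = a then q₁ (d a) else 0) - v₁ a = _
          abel
        rw [hsub]
        exact hcQ
      rw [hmkeq, hv₁mk a]
    · -- chars = χ₂
      funext a
      show (QuotientAddGroup.mk (fun i => ((wtAt (polyOf s₂ w₂) a i : ℤ))) : (I → ℤ) ⧸ Q)
        = χ₂ a
      have hwa : (fun i => ((wtAt (polyOf s₂ w₂) a i : ℤ))) = w₂ a :=
        funext fun i => aux_wtAt_polyOf s₂ w₂ hs₂ hw₂0 hw₂nn a i
      rw [hwa]
      have hcQ : (if rep a = a then q₂ (d a) else 0) ∈ Q := by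
        by_cases hc : rep a = a
        · rw [if_pos hc]; exact hq₂Q (d a) (hdQ a)
        · rw [if_neg hc]; exact Q.zero_mem
      have hmkeq : (QuotientAddGroup.mk (w₂ a) : (I → ℤ) ⧸ Q) = QuotientAddGroup.mk (v₂ a) := by
        apply QuotientAddGroup.eq_iff_sub_mem.mpr
        have hsub : w₂ a - v₂ a = (if rep a = a then q₂ (d a) else 0) := by
          simp only [hw₂def]
          show v₂ a + (if rep a = a then q₂ (d a) else 0) - v₂ a = _
          abel
        rw [hsub]
        exact hcQ
      rw [hmkeq, hv₂mk a]
    · -- folds agree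
      apply aux_fold_eq_of_Tgen_eq hm hζ hpc₁ hpc₂
      intro z i
      have c₁ : ((Tgen m ζ σ (wtAt (polyOf s₁ w₁)) z i : ℕ) : ℤ) = Tgen m ζ σ w₁ z i := by
        rw [Tgen, Tgen]
        push_cast
        exact Finset.sum_congr rfl fun ε _ => aux_wtAt_polyOf s₁ w₁ hs₁ hw₁0 hw₁nn _ _
      have c₂ : ((Tgen m ζ σ (wtAt (polyOf s₂ w₂)) z i : ℕ) : ℤ) = Tgen m ζ σ w₂ z i := by
        rw [Tgen, Tgen]
        push_cast
        exact Finset.sum_congr rfl fun ε _ => aux_wtAt_polyOf s₂ w₂ hs₂ hw₂0 hw₂nn _ _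
      have := c₁.trans ((hTw z i).trans c₂.symm)
      exact_mod_cast this

end
end

section
/- Let $m = 2$, $\lambda, \mu \in P^+_\sigma$, $a \in \mathbb{C}^\times$, and $\eta \in (P^+ - \lambda) \cap (P^- + \sigma(\mu))$. Then $\mathbf{r}(\boldsymbol\pi_{\lambda+\eta, a} \cdot \boldsymbol\pi_{\mu - \sigma(\eta), -a}) = \boldsymbol\pi^\sigma_{\lambda, a} \cdot \boldsymbol\pi^\sigma_{\mu, -a}$. -/
open Polynomial

noncomputable section

variable {I I₀ : Type*}

/-- 𝛑_{λ,a} = ((1 - a u)^{λ(hᵢ)})ᵢ ∈ 𝒫, for a dominant weight λ. -/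
def piLam (lam : I → ℕ) (a : ℂ) : I → Polynomial ℂ := fun i => (1 - C a * X) ^ lam i

/-- 𝛑_{λ,a} for a weight λ given in integer coordinates (dominance is imposed as a
hypothesis where relevant). -/
def piLamZ (v : I → ℤ) (a : ℂ) : I → Polynomial ℂ := fun i => (1 - C a * X) ^ (v i).toNat

/-- The action of the diagram automorphism σ on weights, σ(Σ nᵢ ωᵢ) = Σ nᵢ ω_{σ(i)},
i.e. (σ·v)(j) = v(σ⁻¹ j). -/
def sw (σ : Equiv.Perm I) (v : I → ℤ) : I → ℤ := fun i => v (σ.symm i)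

/-- The embedding P⁺_σ ⊆ P⁺: a dominant weight of 𝔤₀, given by its coordinates on
the orbit representatives ι : I₀ → I, regarded as a dominant weight of 𝔤 (zero on
the remaining nodes). -/
def embwt (ι : I₀ → I) (lam : I₀ → ℕ) : I → ℤ :=
  Function.extend ι (fun j => (lam j : ℤ)) (fun _ => 0)

open scoped Classical in
/-- 𝛑^σ_{κ,b} ∈ 𝒫^σ for κ ∈ P⁺_σ: the component at the node j is
(1 - b^{(α_j,α_j)} u)^{κ(j)}, with (α_j,α_j) = m at nodes fixed by σ and 1 on
full orbits. -/
def piSig (m : ℕ) (σ : Equiv.Perm I) (ι : I₀ → I) (κ : I₀ → ℕ) (b : ℂ) :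
    I₀ → Polynomial ℂ :=
  fun j => (1 - C (b ^ (if σ (ι j) = ι j then m else 1)) * X) ^ κ j

/- ## auxiliary lemmas -/

lemma lin_ne (b : ℂ) (n : ℕ) : ((1 : ℂ[X]) - C b * X) ^ n ≠ 0 := by
  intro h
  have := congrArg (eval 0) h
  simp at this

lemma rm_self (b : ℂ) (hb : b ≠ 0) (n : ℕ) :
    rootMultiplicity b⁻¹ (((1 : ℂ[X]) - C b * X) ^ n) = n := by
  have hb' : (-b) * b⁻¹ = -1 := by field_simp
  have key : ((1 : ℂ[X]) - C b * X) = C (-b) * (X - C b⁻¹) := by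
    rw [mul_sub, ← C_mul, hb', map_neg, map_neg, C_1]
    ring
  rw [key, mul_pow, ← C_pow, ← one_mul ((X - C b⁻¹)^n), ← mul_assoc, mul_one,
    rootMultiplicity_mul_X_sub_C_pow (by simp [pow_ne_zero_iff, hb] : (C ((-b)^n) : ℂ[X]) ≠ 0),
    rootMultiplicity_C, zero_add]

lemma rm_other (b c : ℂ) (h : b * c ≠ 1) (n : ℕ) :
    rootMultiplicity c (((1 : ℂ[X]) - C b * X) ^ n) = 0 := by
  apply rootMultiplicity_eq_zero
  simp only [IsRoot, eval_pow, eval_sub, eval_one, eval_mul, eval_C, eval_X,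
    pow_eq_zero_iff', sub_eq_zero]
  rintro ⟨h1, -⟩
  exact h h1.symm


/-- let m = 2, λ, μ ∈ P⁺_σ, a ∈ ℂˣ, and
η ∈ (P⁺ - λ) ∩ (P⁻ + σ(μ)).  Then
𝐫(𝛑_{λ+η,a} ⬝ 𝛑_{μ-σ(η),-a}) = 𝛑^σ_{λ,a} ⬝ 𝛑^σ_{μ,-a}. -/
theorem stmt7 {I I₀ : Type*} [Fintype I]
    (σ : Equiv.Perm I) (hσ : σ * σ = 1)
    (ι : I₀ → I) (hinj : Function.Injective ι)
    (horb : ∀ i : I, ∃ j : I₀, i = ι j ∨ i = σ (ι j))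
    (hsep : ∀ j j' : I₀, σ (ι j) = ι j' → ι j = ι j')
    (a : ℂ) (ha : a ≠ 0)
    (lam mu : I₀ → ℕ) (η : I → ℤ)
    (hdom : ∀ i, 0 ≤ embwt ι lam i + η i)
    (hup : ∀ i, η i ≤ sw σ (embwt ι mu) i) :
    fold 2 (-1 : ℂ) σ ι
        (piLamZ (fun i => embwt ι lam i + η i) a *
          piLamZ (fun i => embwt ι mu i - sw σ η i) (-a))
      = piSig 2 σ ι lam a * piSig 2 σ ι mu (-a) := by
  classical
  set v : I → ℤ := fun i => embwt ι lam i + η i with hv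
  set w : I → ℤ := fun i => embwt ι mu i - sw σ η i with hw
  set f : I → ℂ[X] := piLamZ v a * piLamZ w (-a) with hf
  have hσσ : ∀ x, σ (σ x) = x := by
    intro x
    rw [← Equiv.Perm.mul_apply, hσ, Equiv.Perm.one_apply]
  have hsymm : ∀ x, σ.symm x = σ x := by
    intro x
    rw [Equiv.symm_apply_eq, hσσ]
  have hane : a ≠ -a := fun h => ha (by linear_combination h / 2)
  have hna : (-a) ≠ 0 := neg_ne_zero.mpr ha
  have hfk : ∀ k, f k = (1 - C a * X) ^ (v k).toNat * (1 - C (-a) * X) ^ (w k).toNat := by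
    intro k; rfl
  have hfne : ∀ k, f k ≠ 0 := by
    intro k; rw [hfk k]; exact mul_ne_zero (lin_ne _ _) (lin_ne _ _)
  have hPne : (∏ i, f i) ≠ 0 := Finset.prod_ne_zero_iff.mpr fun i _ => hfne i
  have hwa : ∀ k, wtAt f a k = (v k).toNat := by
    intro k
    rw [wtAt, hfk k, rootMultiplicity_mul (by rw [← hfk k]; exact hfne k),
      rm_self a ha, rm_other (-a) a⁻¹ (by rw [neg_mul, mul_inv_cancel₀ ha]; norm_num) _, add_zero]
  have hwb : ∀ k, wtAt f (-a) k = (w k).toNat := by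
    intro k
    rw [wtAt, hfk k, rootMultiplicity_mul (by rw [← hfk k]; exact hfne k),
      rm_self (-a) hna, rm_other a (-a)⁻¹ (by rw [inv_neg, mul_neg, mul_inv_cancel₀ ha]; norm_num) _, zero_add]
  have key : ∀ j, fold 2 (-1 : ℂ) σ ι f j =
      ∏ b ∈ ({a, -a} : Finset ℂ), ∏ ε ∈ Finset.range 2,
        (1 - C (((-1 : ℂ) ^ ε * b) ^ (if σ (ι j) = ι j then 2 else 1)) * X) ^
          lamComp σ ι (wtAt f b) ε j := by
    intro j
    rw [fold]
    apply Finset.prod_subset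
    · intro b hb
      simp only [Finset.mem_image, Multiset.mem_toFinset] at hb
      obtain ⟨r, hr, hrb⟩ := hb
      have hroot : IsRoot (∏ i, f i) r := (mem_roots hPne).mp hr
      rw [IsRoot, eval_prod] at hroot
      obtain ⟨i, -, hi⟩ := Finset.prod_eq_zero_iff.mp hroot
      rw [hfk i] at hi
      simp only [eval_mul, eval_pow, eval_sub, eval_one, eval_mul, eval_C, eval_X,
        mul_eq_zero, pow_eq_zero_iff', sub_eq_zero] at hi
      have hr2 : r = a⁻¹ ∨ r = (-a)⁻¹ := by
        rcases hi with ⟨h1, -⟩ | ⟨h1, -⟩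
        · exact Or.inl (inv_eq_of_mul_eq_one_right h1.symm).symm
        · exact Or.inr (inv_eq_of_mul_eq_one_right h1.symm).symm
      rcases hr2 with rfl | rfl
      · rw [← hrb, inv_inv]; simp
      · rw [← hrb, inv_inv]; simp
    · intro b hbT hbS
      have hwt : ∀ k, wtAt f b k = 0 := by
        intro k
        by_contra hk
        have hroot : IsRoot (f k) b⁻¹ :=
          (rootMultiplicity_pos (hfne k)).mp (Nat.pos_of_ne_zero hk)
        have hroot2 : IsRoot (∏ i, f i) b⁻¹ := by
          rw [IsRoot, eval_prod]
          exact Finset.prod_eq_zero (Finset.mem_univ k) hroot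
        apply hbS
        simp only [Finset.mem_image, Multiset.mem_toFinset]
        exact ⟨b⁻¹, (mem_roots hPne).mpr hroot2, inv_inv b⟩
      apply Finset.prod_eq_one
      intro ε hε
      have hz : lamComp σ ι (wtAt f b) ε j = 0 := by
        rw [lamComp]
        split
        · rfl
        · exact hwt _
      rw [hz, pow_zero]
  funext j
  rw [key j]
  rw [show ({a, -a} : Finset ℂ) = insert a {-a} from rfl,
    Finset.prod_insert (by simpa using hane), Finset.prod_singleton]
  simp only [Finset.prod_range_succ, Finset.prod_range_zero, pow_zero, pow_one,
    one_mul, neg_one_mul, neg_neg]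
  have hlam : embwt ι lam (ι j) = lam j := hinj.extend_apply _ _ j
  have hmu : embwt ι mu (ι j) = mu j := hinj.extend_apply _ _ j
  by_cases hfix : σ (ι j) = ι j
  · have hc0a : lamComp σ ι (wtAt f a) 0 j = (v (ι j)).toNat := by
      simp [lamComp, hwa]
    have hc0b : lamComp σ ι (wtAt f (-a)) 0 j = (w (ι j)).toNat := by
      simp [lamComp, hwb]
    have hc1a : lamComp σ ι (wtAt f a) 1 j = 0 := by
      simp [lamComp, hfix]
    have hc1b : lamComp σ ι (wtAt f (-a)) 1 j = 0 := by
      simp [lamComp, hfix]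
    rw [hc0a, hc0b, hc1a, hc1b]
    simp only [if_pos hfix, pow_zero, mul_one, neg_sq, Pi.mul_apply, piSig]
    rw [← pow_add, ← pow_add]
    congr 1
    have h1 : 0 ≤ lam j + η (ι j) := by have := hdom (ι j); rwa [hlam] at this
    have h2 : η (ι j) ≤ mu j := by
      have := hup (ι j)
      rwa [sw, hsymm, hfix, hmu] at this
    have hveq : v (ι j) = lam j + η (ι j) := by rw [hv]; simp [hlam]
    have hweq : w (ι j) = mu j - η (ι j) := by
      rw [hw]; simp [sw, hsymm, hfix, hmu]
    rw [hveq, hweq]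
    omega
  · have hnr : ¬∃ j', ι j' = σ (ι j) := by
      rintro ⟨j', hj'⟩
      exact hfix ((hj'.symm ▸ rfl : σ (ι j) = ι j') ▸ (hsep j j' hj'.symm).symm ▸ rfl)
    have hout : ∀ κ : I₀ → ℕ, embwt ι κ (σ (ι j)) = 0 := by
      intro κ; rw [embwt, Function.extend_apply' _ _ _ hnr]
    have hc0a : lamComp σ ι (wtAt f a) 0 j = (v (ι j)).toNat := by
      simp [lamComp, hwa]
    have hc0b : lamComp σ ι (wtAt f (-a)) 0 j = (w (ι j)).toNat := by
      simp [lamComp, hwb]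
    have hc1a : lamComp σ ι (wtAt f a) 1 j = (v (σ (ι j))).toNat := by
      simp [lamComp, hfix, hwa]
    have hc1b : lamComp σ ι (wtAt f (-a)) 1 j = (w (σ (ι j))).toNat := by
      simp [lamComp, hfix, hwb]
    rw [hc0a, hc0b, hc1a, hc1b]
    simp only [if_neg hfix, pow_one, Pi.mul_apply, piSig]
    have hveq : v (ι j) = lam j + η (ι j) := by rw [hv]; simp [hlam]
    have hveq2 : v (σ (ι j)) = η (σ (ι j)) := by rw [hv]; simp [hout]
    have hweq : w (ι j) = mu j - η (σ (ι j)) := by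
      rw [hw]; simp [sw, hsymm, hmu]
    have hweq2 : w (σ (ι j)) = -η (ι j) := by
      rw [hw]; simp [sw, hsymm, hσσ, hout]
    have h1 : 0 ≤ lam j + η (ι j) := by have := hdom (ι j); rwa [hlam] at this
    have h2 : 0 ≤ η (σ (ι j)) := by
      have := hdom (σ (ι j)); rwa [hout, zero_add] at this
    have h3 : η (ι j) ≤ 0 := by
      have := hup (ι j); rwa [sw, hsymm, hout] at this
    have h4 : η (σ (ι j)) ≤ mu j := by
      have := hup (σ (ι j)); rwa [sw, hsymm, hσσ, hmu] at this
    have e1 : (v (ι j)).toNat + (w (σ (ι j))).toNat = lam j := by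
      rw [hveq, hweq2]; omega
    have e2 : (v (σ (ι j))).toNat + (w (ι j)).toNat = mu j := by
      rw [hveq2, hweq]; omega
    rw [← e1, ← e2, pow_add, pow_add]
    ring

end
end

section
/- Let $m = 2$, $\lambda \in P^+_\sigma$, $a \in \mathbb{C}^\times$. Then the fiber of the folding map over $\boldsymbol\pi^\sigma_{\lambda,a}$ is exactly $\mathbf{r}^{-1}(\boldsymbol\pi^\sigma_{\lambda,a}) = \{ \boldsymbol\pi_{\lambda+\eta, a} \boldsymbol\pi_{-\sigma(\eta), -a} : \eta \in (P^+ - \lambda) \cap P^- \}$. -/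
open Polynomial

noncomputable section

variable {I I₀ : Type*}

open scoped Classical

section Stmt8Aux

lemma eval0_one_sub (c : ℂ) : (1 - C c * X).eval 0 = 1 := by simp

lemma one_sub_ne (c : ℂ) : (1 - C c * X) ≠ 0 := fun h => by
  have := eval0_one_sub c; rw [h] at this; simp at this

lemma roots_one_sub {c : ℂ} (hc : c ≠ 0) : (1 - C c * X).roots = {c⁻¹} := by
  have h : (1 - C c * X) = C (-c) * (X - C c⁻¹) := by
    rw [mul_sub, ← C_mul, neg_mul, mul_inv_cancel₀ hc, map_neg, map_neg, C_1]
    ring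
  rw [h, roots_C_mul _ (neg_ne_zero.mpr hc), roots_X_sub_C]

lemma mult_pow_one_sub (c : ℂ) (k : ℕ) (x : ℂ) :
    ((1 - C c * X) ^ k).rootMultiplicity x = if c ≠ 0 ∧ x = c⁻¹ then k else 0 := by
  rw [← count_roots, roots_pow]
  by_cases hc : c = 0
  · subst hc; simp
  · rw [roots_one_sub hc]
    simp [hc, Multiset.count_nsmul, Multiset.count_singleton, eq_comm]

lemma mult_prod {α : Type*} (s : Finset α) (F : α → Polynomial ℂ)
    (h : ∀ i ∈ s, F i ≠ 0) (x : ℂ) :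
    (∏ i ∈ s, F i).rootMultiplicity x = ∑ i ∈ s, (F i).rootMultiplicity x := by
  have hne : ∏ i ∈ s, F i ≠ 0 := Finset.prod_ne_zero_iff.mpr h
  rw [← count_roots, roots_prod _ _ hne, Multiset.count_bind]
  simp only [← count_roots]
  rfl

lemma eq_of_mult {p q : Polynomial ℂ} (hp : p.coeff 0 = 1) (hq : q.coeff 0 = 1)
    (h : ∀ x, p.rootMultiplicity x = q.rootMultiplicity x) : p = q := by
  have hroots : p.roots = q.roots := by
    apply Multiset.ext.mpr; intro x
    rw [count_roots, count_roots, h]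
  have hPp := (IsAlgClosed.splits p).eq_prod_roots
  have hPq := (IsAlgClosed.splits q).eq_prod_roots
  rw [hroots] at hPp
  have hep : p.eval 0 = 1 := by rw [← coeff_zero_eq_eval_zero, hp]
  have heq : q.eval 0 = 1 := by rw [← coeff_zero_eq_eval_zero, hq]
  set M := (q.roots.map fun a => X - C a).prod with hM
  have h1 : p.leadingCoeff * M.eval 0 = 1 := by
    rw [← hep]
    conv_lhs => rw [show p.leadingCoeff * M.eval 0 = (C p.leadingCoeff * M).eval 0 by simp]
    rw [← hPp]
  have h2 : q.leadingCoeff * M.eval 0 = 1 := by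
    rw [← heq]
    conv_lhs => rw [show q.leadingCoeff * M.eval 0 = (C q.leadingCoeff * M).eval 0 by simp]
    rw [← hPq]
  have hM0 : M.eval 0 ≠ 0 := fun h0 => by rw [h0, mul_zero] at h1; exact one_ne_zero h1.symm
  have hlead : p.leadingCoeff = q.leadingCoeff :=
    mul_right_cancel₀ hM0 (h1.trans h2.symm)
  rw [hPp, hPq, hlead]

lemma sum_swap_support (S T : Finset ℂ) (g : ℂ → ℕ)
    (h : ∀ b, g b ≠ 0 → b ∈ S ∧ b ∈ T) : ∑ b ∈ S, g b = ∑ b ∈ T, g b := by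
  have h1 : ∑ b ∈ S, g b = ∑ b ∈ S ∪ T, g b :=
    Finset.sum_subset Finset.subset_union_left
      (fun b _ hb => not_ne_iff.mp (fun h0 => hb (h b h0).1))
  have h2 : ∑ b ∈ T, g b = ∑ b ∈ S ∪ T, g b :=
    Finset.sum_subset Finset.subset_union_right
      (fun b _ hb => not_ne_iff.mp (fun h0 => hb (h b h0).2))
  rw [h1, h2]

variable [Fintype I]

lemma eval0_prodf (f : I → Polynomial ℂ) (h1 : ∀ i, (f i).coeff 0 = 1) :
    (∏ i, f i).eval 0 = 1 := by
  rw [eval_prod]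
  exact Finset.prod_eq_one (fun i _ => by rw [← coeff_zero_eq_eval_zero]; exact h1 i)

lemma prodf_ne (f : I → Polynomial ℂ) (h1 : ∀ i, (f i).coeff 0 = 1) : (∏ i, f i) ≠ 0 := by
  intro h0
  have := eval0_prodf f h1
  rw [h0] at this; simp at this

lemma S_nonzero (f : I → Polynomial ℂ) (h1 : ∀ i, (f i).coeff 0 = 1) :
    ∀ b ∈ ((∏ i, f i).roots.toFinset.image fun r => r⁻¹), b ≠ 0 := by
  intro b hb
  rcases Finset.mem_image.mp hb with ⟨r, hr, rfl⟩
  have hr' : r ∈ (∏ i, f i).roots := Multiset.mem_toFinset.mp hr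
  intro h0
  have hrr : r = 0 := inv_eq_zero.mp h0
  have hroot : (∏ i, f i).IsRoot 0 := by
    have := (mem_roots'.mp hr').2
    rwa [hrr] at this
  rw [IsRoot, eval0_prodf f h1] at hroot
  exact one_ne_zero hroot

lemma mem_S_of_wt (f : I → Polynomial ℂ) (h1 : ∀ i, (f i).coeff 0 = 1) {b : ℂ} {i : I}
    (h : wtAt f b i ≠ 0) :
    b ∈ ((∏ i, f i).roots.toFinset.image fun r => r⁻¹) := by
  have hfi : f i ≠ 0 := fun h0 => by have := h1 i; rw [h0] at this; simp at this
  have hroot : b⁻¹ ∈ (f i).roots := by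
    rw [mem_roots']
    exact ⟨hfi, (rootMultiplicity_pos hfi).mp (Nat.pos_of_ne_zero h)⟩
  have : b⁻¹ ∈ (∏ i, f i).roots := by
    rw [roots_prod _ _ (prodf_ne f h1)]
    exact Multiset.mem_bind.mpr ⟨i, Finset.mem_univ i, hroot⟩
  exact Finset.mem_image.mpr ⟨b⁻¹, Multiset.mem_toFinset.mpr this, inv_inv b⟩

lemma wtAt_zero (f : I → Polynomial ℂ) (h1 : ∀ i, (f i).coeff 0 = 1) (i : I) :
    wtAt f (0 : ℂ) i = 0 := by
  unfold wtAt
  rw [inv_zero]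
  apply rootMultiplicity_eq_zero
  intro h
  rw [IsRoot, ← coeff_zero_eq_eval_zero, h1 i] at h
  exact one_ne_zero h

lemma mult_fold (f : I → Polynomial ℂ) (h1 : ∀ i, (f i).coeff 0 = 1)
    (σ : Equiv.Perm I) (ι : I₀ → I) (j : I₀) (x : ℂ) :
    (fold 2 (-1 : ℂ) σ ι f j).rootMultiplicity x =
      ∑ b ∈ ((∏ i, f i).roots.toFinset.image fun r => r⁻¹),
        ∑ ε ∈ Finset.range 2,
          (if x = ((((-1 : ℂ)) ^ ε * b) ^ (if σ (ι j) = ι j then 2 else 1))⁻¹ then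
            lamComp σ ι (wtAt f b) ε j else 0) := by
  unfold fold
  rw [mult_prod _ _
    (fun b _ => Finset.prod_ne_zero_iff.mpr (fun ε _ => pow_ne_zero _ (one_sub_ne _)))]
  refine Finset.sum_congr rfl (fun b hb => ?_)
  rw [mult_prod _ _ (fun ε _ => pow_ne_zero _ (one_sub_ne _))]
  refine Finset.sum_congr rfl (fun ε _ => ?_)
  have hb0 : b ≠ 0 := S_nonzero f h1 b hb
  have hmul : (-1 : ℂ) ^ ε * b ≠ 0 := mul_ne_zero (pow_ne_zero _ (by norm_num)) hb0
  rw [mult_pow_one_sub, if_congr (and_iff_right (pow_ne_zero _ hmul)) rfl rfl]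

lemma coeff0_fold (f : I → Polynomial ℂ)
    (σ : Equiv.Perm I) (ι : I₀ → I) (j : I₀) :
    (fold 2 (-1 : ℂ) σ ι f j).coeff 0 = 1 := by
  unfold fold
  rw [coeff_zero_eq_eval_zero, eval_prod]
  refine Finset.prod_eq_one (fun b _ => ?_)
  rw [eval_prod]
  exact Finset.prod_eq_one (fun ε _ => by simp)

end Stmt8Aux

theorem stmt8 {I I₀ : Type*} [Fintype I]
    (σ : Equiv.Perm I) (hσ : σ * σ = 1)
    (ι : I₀ → I) (hinj : Function.Injective ι)
    (horb : ∀ i : I, ∃ j : I₀, i = ι j ∨ i = σ (ι j))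
    (hsep : ∀ j j' : I₀, σ (ι j) = ι j' → ι j = ι j')
    (a : ℂ) (ha : a ≠ 0) (lam : I₀ → ℕ) :
    ∀ f : I → Polynomial ℂ, (∀ i, (f i).coeff 0 = 1) →
      (fold 2 (-1 : ℂ) σ ι f = piSig 2 σ ι lam a ↔
        ∃ η : I → ℤ,
          (∀ i, 0 ≤ embwt ι lam i + η i) ∧ (∀ i, η i ≤ 0) ∧
          f = piLamZ (fun i => embwt ι lam i + η i) a *
              piLamZ (fun i => -(sw σ η i)) (-a)) := by
  intro f hf
  have hσ2 : ∀ i, σ (σ i) = i := fun i => by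
    have := congrArg (fun τ : Equiv.Perm I => τ i) hσ
    simpa [Equiv.Perm.mul_apply] using this
  have hsymm : ∀ i, σ.symm i = σ i := fun i => (Equiv.symm_apply_eq σ).mpr (hσ2 i).symm
  have hna : (-a : ℂ) ≠ a := by
    intro h
    apply ha
    have h2 : (2 : ℂ) * a = 0 := by linear_combination -h
    exact (mul_eq_zero.mp h2).resolve_left two_ne_zero
  have hsq : ∀ b : ℂ, b ^ 2 = a ^ 2 ↔ b = a ∨ b = -a := by
    intro b
    constructor
    · intro h
      have h' : (b - a) * (b + a) = 0 := by linear_combination h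
      rcases mul_eq_zero.mp h' with h'' | h''
      · exact Or.inl (sub_eq_zero.mp h'')
      · exact Or.inr (eq_neg_of_add_eq_zero_left h'')
    · rintro (rfl | rfl) <;> ring
  have hemb1 : ∀ j, embwt ι lam (ι j) = (lam j : ℤ) := fun j => hinj.extend_apply _ _ j
  have hemb2 : ∀ i, i ∉ Set.range ι → embwt ι lam i = 0 := fun i hi =>
    Function.extend_apply' _ _ _ (fun ⟨j, hj⟩ => hi ⟨j, hj⟩)
  have hnr : ∀ j, σ (ι j) ≠ ι j → σ (ι j) ∉ Set.range ι := by
    rintro j hj ⟨j', hj'⟩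
    have h1 : σ (ι j) = ι j' := hj'.symm
    exact hj (h1.trans (hsep j j' h1).symm)
  constructor
  · -- forward direction
    intro H
    have Hm : ∀ j x,
        (∑ b ∈ ((∏ i, f i).roots.toFinset.image fun r => r⁻¹),
          ∑ ε ∈ Finset.range 2,
            (if x = ((((-1 : ℂ)) ^ ε * b) ^ (if σ (ι j) = ι j then 2 else 1))⁻¹ then
              lamComp σ ι (wtAt f b) ε j else 0))
          = (if x = (a ^ (if σ (ι j) = ι j then 2 else 1))⁻¹ then lam j else 0) := by
      intro j x
      rw [← mult_fold f hf σ ι j x, H]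
      unfold piSig
      rw [mult_pow_one_sub, if_congr (and_iff_right (pow_ne_zero _ ha)) rfl rfl]
    have ext_fix : ∀ j, σ (ι j) = ι j →
        (∀ b, b ≠ a → b ≠ -a → wtAt f b (ι j) = 0) ∧
        wtAt f a (ι j) + wtAt f (-a) (ι j) = lam j := by
      intro j hfix
      have Hm' : ∀ x,
          (∑ b ∈ ((∏ i, f i).roots.toFinset.image fun r => r⁻¹),
            if x = (b ^ 2)⁻¹ then wtAt f b (ι j) else 0)
          = if x = (a ^ 2)⁻¹ then lam j else 0 := by
        intro x
        rw [show ((if x = (a ^ 2)⁻¹ then lam j else 0) =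
            if x = (a ^ (if σ (ι j) = ι j then 2 else 1))⁻¹ then lam j else 0) by
          rw [if_pos hfix]]
        rw [← Hm j x]
        refine Finset.sum_congr rfl (fun b _ => ?_)
        have c0 : (((-1 : ℂ) ^ 0 * b) ^ (if σ (ι j) = ι j then 2 else 1)) = b ^ 2 := by
          rw [if_pos hfix]; ring
        have c1 : (((-1 : ℂ) ^ 1 * b) ^ (if σ (ι j) = ι j then 2 else 1)) = b ^ 2 := by
          rw [if_pos hfix]; ring
        have l0 : lamComp σ ι (wtAt f b) 0 j = wtAt f b (ι j) := by simp [lamComp]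
        have l1 : lamComp σ ι (wtAt f b) 1 j = 0 := by simp [lamComp, hfix]
        rw [Finset.sum_range_succ, Finset.sum_range_one, c0, c1, l0, l1]
        simp
      constructor
      · intro b hba hbna
        by_contra hb0
        have hbS := mem_S_of_wt f hf hb0
        have hcond : ¬ ((b ^ 2)⁻¹ = (a ^ 2)⁻¹) := by
          intro h
          rcases (hsq b).mp (inv_injective h) with h' | h'
          · exact hba h'
          · exact hbna h'
        have := Hm' (b ^ 2)⁻¹
        rw [if_neg hcond] at this
        have := Finset.sum_eq_zero_iff.mp this b hbS
        rw [if_pos rfl] at this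
        exact hb0 this
      · have := Hm' (a ^ 2)⁻¹
        rw [if_pos rfl] at this
        rw [sum_swap_support _ ({a, -a} : Finset ℂ) _ (fun b hb => by
          have hcond : (a ^ 2)⁻¹ = (b ^ 2)⁻¹ := by
            by_contra hc; rw [if_neg hc] at hb; exact hb rfl
          have hw : wtAt f b (ι j) ≠ 0 := by
            rw [if_pos hcond] at hb; exact hb
          refine ⟨mem_S_of_wt f hf hw, ?_⟩
          rcases (hsq b).mp (inv_injective hcond.symm) with h' | h'
          · simp [h']
          · simp [h'])] at this
        rw [Finset.sum_pair (Ne.symm hna)] at this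
        rw [if_pos rfl, if_pos (by rw [neg_pow]; norm_num : (a ^ 2)⁻¹ = ((-a) ^ 2)⁻¹)] at this
        exact this
    have ext_nonfix : ∀ j, σ (ι j) ≠ ι j → ∀ b,
        wtAt f b (ι j) + wtAt f (-b) (σ (ι j)) = if b = a then lam j else 0 := by
      intro j hnf b
      have Hm' : ∀ x,
          (∑ b ∈ ((∏ i, f i).roots.toFinset.image fun r => r⁻¹),
            ((if x = b⁻¹ then wtAt f b (ι j) else 0) +
             (if x = (-b)⁻¹ then wtAt f b (σ (ι j)) else 0)))
          = if x = a⁻¹ then lam j else 0 := by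
        intro x
        rw [show ((if x = a⁻¹ then lam j else 0) =
            if x = (a ^ (if σ (ι j) = ι j then 2 else 1))⁻¹ then lam j else 0) by
          rw [if_neg hnf, pow_one]]
        rw [← Hm j x]
        refine Finset.sum_congr rfl (fun b _ => ?_)
        have c0 : (((-1 : ℂ) ^ 0 * b) ^ (if σ (ι j) = ι j then 2 else 1)) = b := by
          rw [if_neg hnf]; ring
        have c1 : (((-1 : ℂ) ^ 1 * b) ^ (if σ (ι j) = ι j then 2 else 1)) = -b := by
          rw [if_neg hnf]; ring
        have l0 : lamComp σ ι (wtAt f b) 0 j = wtAt f b (ι j) := by simp [lamComp]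
        have l1 : lamComp σ ι (wtAt f b) 1 j = wtAt f b (σ (ι j)) := by
          simp [lamComp, hnf]
        rw [Finset.sum_range_succ, Finset.sum_range_one, c0, c1, l0, l1]
      by_cases hb : b = 0
      · subst hb
        rw [wtAt_zero f hf, neg_zero, wtAt_zero f hf, if_neg (fun h => ha h.symm)]
      · have hbb : b ≠ -b := by
          intro h
          apply hb
          have h2 : (2 : ℂ) * b = 0 := by linear_combination h
          exact (mul_eq_zero.mp h2).resolve_left two_ne_zero
        have := Hm' b⁻¹
        rw [sum_swap_support _ ({b, -b} : Finset ℂ) _ (fun b' hb' => by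
          have : (b⁻¹ = b'⁻¹ ∧ wtAt f b' (ι j) ≠ 0) ∨
                 (b⁻¹ = (-b')⁻¹ ∧ wtAt f b' (σ (ι j)) ≠ 0) := by
            by_cases h1 : b⁻¹ = b'⁻¹ <;> by_cases h2 : b⁻¹ = (-b')⁻¹
            · by_cases hw : wtAt f b' (ι j) ≠ 0
              · exact Or.inl ⟨h1, hw⟩
              · refine Or.inr ⟨h2, fun hw2 => hb' ?_⟩
                rw [if_pos h1, if_pos h2, not_ne_iff.mp hw, hw2]
            · refine Or.inl ⟨h1, fun hw => hb' ?_⟩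
              rw [if_pos h1, if_neg h2, hw]
            · refine Or.inr ⟨h2, fun hw => hb' ?_⟩
              rw [if_neg h1, if_pos h2, hw]
            · exact absurd (by rw [if_neg h1, if_neg h2]) hb'
          rcases this with ⟨h1, hw⟩ | ⟨h2, hw⟩
          · refine ⟨mem_S_of_wt f hf hw, ?_⟩
            rw [inv_injective h1]
            exact Finset.mem_insert_self _ _
          · refine ⟨mem_S_of_wt f hf hw, ?_⟩
            have : -b' = b := inv_injective h2.symm
            have : b' = -b := by rw [← this, neg_neg]
            rw [this]
            exact Finset.mem_insert_of_mem (Finset.mem_singleton_self _))] at this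
        rw [Finset.sum_pair hbb] at this
        rw [if_pos rfl, if_neg (fun h => hbb (inv_injective h)),
          if_neg (fun h : b⁻¹ = (-b)⁻¹ => hbb (inv_injective h)),
          if_pos (by rw [neg_neg] : b⁻¹ = (-(-b))⁻¹)] at this
        rw [show ((if b⁻¹ = a⁻¹ then lam j else 0) = if b = a then lam j else 0) by
          exact if_congr inv_inj rfl rfl] at this
        simpa using this
    -- ν b i = 0 for b ∉ {a, -a}
    have key0 : ∀ b, b ≠ a → b ≠ -a → ∀ i, wtAt f b i = 0 := by
      intro b hba hbna i
      obtain ⟨j, hij⟩ := horb i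
      by_cases hfix : σ (ι j) = ι j
      · have hi : i = ι j := by rcases hij with rfl | rfl <;> first | rfl | exact hfix
        rw [hi]
        exact (ext_fix j hfix).1 b hba hbna
      · rcases hij with rfl | rfl
        · have := ext_nonfix j hfix b
          rw [if_neg hba] at this
          omega
        · have := ext_nonfix j hfix (-b)
          rw [neg_neg] at this
          rw [if_neg (fun h : -b = a => hbna (by rw [← h, neg_neg]))] at this
          omega
    have keyA : ∀ i, (wtAt f a i : ℤ) + (wtAt f (-a) (σ i) : ℤ) = embwt ι lam i := by
      intro i
      obtain ⟨j, hij⟩ := horb i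
      by_cases hfix : σ (ι j) = ι j
      · have hi : i = ι j := by rcases hij with rfl | rfl <;> first | rfl | exact hfix
        subst hi
        rw [hfix, hemb1]
        exact_mod_cast congrArg (fun n : ℕ => (n : ℤ)) (ext_fix j hfix).2
      · rcases hij with rfl | rfl
        · have := ext_nonfix j hfix a
          rw [if_pos rfl] at this
          rw [hemb1]
          exact_mod_cast congrArg (fun n : ℕ => (n : ℤ)) this
        · have h0 := ext_nonfix j hfix (-a)
          rw [neg_neg, if_neg hna] at h0
          rw [hσ2, hemb2 _ (hnr j hfix)]
          omega
    refine ⟨fun i => -(wtAt f (-a) (σ i) : ℤ), ?_, ?_, ?_⟩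
    · intro i
      show 0 ≤ embwt ι lam i + -(wtAt f (-a) (σ i) : ℤ)
      have := keyA i
      omega
    · intro i
      show -(wtAt f (-a) (σ i) : ℤ) ≤ 0
      omega
    · funext i
      apply eq_of_mult (hf i)
      · rw [Pi.mul_apply, coeff_zero_eq_eval_zero]
        unfold piLamZ
        simp
      · intro x
        have hL : (f i).rootMultiplicity x = wtAt f x⁻¹ i := by
          unfold wtAt; rw [inv_inv]
        have hE1 : (embwt ι lam i + -(wtAt f (-a) (σ i) : ℤ)).toNat = wtAt f a i := by
          have := keyA i
          omega
        have hE2 : (-(sw σ (fun i => -(wtAt f (-a) (σ i) : ℤ)) i)).toNat = wtAt f (-a) i := by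
          show (-(-(wtAt f (-a) (σ (σ.symm i)) : ℤ))).toNat = wtAt f (-a) i
          rw [hsymm, hσ2, neg_neg, Int.toNat_natCast]
        rw [hL, Pi.mul_apply]
        unfold piLamZ
        rw [rootMultiplicity_mul (mul_ne_zero (pow_ne_zero _ (one_sub_ne a))
          (pow_ne_zero _ (one_sub_ne (-a)))), mult_pow_one_sub, mult_pow_one_sub,
          if_congr (and_iff_right ha) rfl rfl,
          if_congr (and_iff_right (neg_ne_zero.mpr ha)) rfl rfl, hE1, hE2]
        by_cases hx1 : x = a⁻¹
        · have hxi : x⁻¹ = a := by rw [hx1, inv_inv]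
          have hx2 : ¬ (x = (-a)⁻¹) := fun h => hna (inv_injective (hx1.symm.trans h)).symm
          rw [if_pos hx1, if_neg hx2, hxi, add_zero]
        · by_cases hx2 : x = (-a)⁻¹
          · have hxi : x⁻¹ = -a := by rw [hx2, inv_inv]
            rw [if_neg hx1, if_pos hx2, hxi, zero_add]
          · have hxa : x⁻¹ ≠ a := fun h => hx1 (by rw [← h, inv_inv])
            have hxna : x⁻¹ ≠ -a := fun h => hx2 (by rw [← h, inv_inv])
            rw [if_neg hx1, if_neg hx2, key0 _ hxa hxna]
  · -- backward direction
    rintro ⟨η, hge, hle, hfeq⟩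
    have hν : ∀ b i, wtAt f b i =
        (if b = a then (embwt ι lam i + η i).toNat else 0) +
        (if b = -a then (-(η (σ i))).toNat else 0) := by
      intro b i
      unfold wtAt
      rw [hfeq, Pi.mul_apply]
      unfold piLamZ
      rw [rootMultiplicity_mul (mul_ne_zero (pow_ne_zero _ (one_sub_ne a))
        (pow_ne_zero _ (one_sub_ne (-a)))), mult_pow_one_sub, mult_pow_one_sub,
        if_congr (and_iff_right ha) rfl rfl,
        if_congr (and_iff_right (neg_ne_zero.mpr ha)) rfl rfl]
      congr 1
      · exact if_congr inv_inj rfl rfl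
      · refine if_congr inv_inj ?_ rfl
        show (-(η (σ.symm i))).toNat = (-(η (σ i))).toNat
        rw [hsymm]
    have hηz : ∀ j, σ (ι j) ≠ ι j → η (σ (ι j)) = 0 := by
      intro j h
      have h1 := hge (σ (ι j))
      rw [hemb2 _ (hnr j h)] at h1
      have h2 := hle (σ (ι j))
      omega
    have hva : ∀ i, wtAt f a i = (embwt ι lam i + η i).toNat := by
      intro i
      rw [hν a i, if_pos rfl, if_neg (Ne.symm hna), add_zero]
    have hvna : ∀ i, wtAt f (-a) i = (-(η (σ i))).toNat := by
      intro i
      rw [hν (-a) i, if_neg hna, if_pos rfl, zero_add]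
    funext j
    apply eq_of_mult (coeff0_fold f σ ι j)
    · unfold piSig
      rw [coeff_zero_eq_eval_zero]
      simp
    · intro x
      rw [mult_fold f hf σ ι j x]
      unfold piSig
      rw [mult_pow_one_sub, if_congr (and_iff_right (pow_ne_zero _ ha)) rfl rfl]
      rw [sum_swap_support _ ({a, -a} : Finset ℂ) _ (fun b hgb => by
        have hεex : ∃ ε ∈ Finset.range 2, lamComp σ ι (wtAt f b) ε j ≠ 0 := by
          by_contra hc
          push_neg at hc
          exact hgb (Finset.sum_eq_zero fun ε hε => by rw [hc ε hε]; simp)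
        obtain ⟨ε, _, hl⟩ := hεex
        have hν' : wtAt f b ((σ ^ ε) (ι j)) ≠ 0 := by
          intro h0
          apply hl
          unfold lamComp
          split
          · rfl
          · exact h0
        refine ⟨mem_S_of_wt f hf hν', ?_⟩
        by_contra hmem
        simp only [Finset.mem_insert, Finset.mem_singleton] at hmem
        push_neg at hmem
        apply hν'
        rw [hν, if_neg hmem.1, if_neg hmem.2])]
      rw [Finset.sum_pair (Ne.symm hna)]
      by_cases hfix : σ (ι j) = ι j
      · have c0a : (((-1 : ℂ) ^ 0 * a) ^ (if σ (ι j) = ι j then 2 else 1)) = a ^ 2 := by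
          rw [if_pos hfix]; ring
        have c1a : (((-1 : ℂ) ^ 1 * a) ^ (if σ (ι j) = ι j then 2 else 1)) = a ^ 2 := by
          rw [if_pos hfix]; ring
        have c0n : (((-1 : ℂ) ^ 0 * (-a)) ^ (if σ (ι j) = ι j then 2 else 1)) = a ^ 2 := by
          rw [if_pos hfix]; ring
        have c1n : (((-1 : ℂ) ^ 1 * (-a)) ^ (if σ (ι j) = ι j then 2 else 1)) = a ^ 2 := by
          rw [if_pos hfix]; ring
        have l0a : lamComp σ ι (wtAt f a) 0 j = wtAt f a (ι j) := by simp [lamComp]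
        have l1a : lamComp σ ι (wtAt f a) 1 j = 0 := by simp [lamComp, hfix]
        have l0n : lamComp σ ι (wtAt f (-a)) 0 j = wtAt f (-a) (ι j) := by simp [lamComp]
        have l1n : lamComp σ ι (wtAt f (-a)) 1 j = 0 := by simp [lamComp, hfix]
        rw [Finset.sum_range_succ, Finset.sum_range_one,
          Finset.sum_range_succ, Finset.sum_range_one,
          c0a, c1a, c0n, c1n, l0a, l1a, l0n, l1n,
          show ((a ^ (if σ (ι j) = ι j then 2 else 1)) = a ^ 2) by rw [if_pos hfix]]
        have hsum : wtAt f a (ι j) + wtAt f (-a) (ι j) = lam j := by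
          rw [hva, hvna, hfix, hemb1]
          have h1 := hge (ι j)
          rw [hemb1] at h1
          have h2 := hle (ι j)
          omega
        by_cases hx : x = (a ^ 2)⁻¹
        · subst hx
          simp only [eq_self_iff_true, if_true]
          omega
        · simp [hx]
      · have c0a : (((-1 : ℂ) ^ 0 * a) ^ (if σ (ι j) = ι j then 2 else 1)) = a := by
          rw [if_neg hfix]; ring
        have c1a : (((-1 : ℂ) ^ 1 * a) ^ (if σ (ι j) = ι j then 2 else 1)) = -a := by
          rw [if_neg hfix]; ring
        have c0n : (((-1 : ℂ) ^ 0 * (-a)) ^ (if σ (ι j) = ι j then 2 else 1)) = -a := by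
          rw [if_neg hfix]; ring
        have c1n : (((-1 : ℂ) ^ 1 * (-a)) ^ (if σ (ι j) = ι j then 2 else 1)) = a := by
          rw [if_neg hfix]; ring
        have l0a : lamComp σ ι (wtAt f a) 0 j = wtAt f a (ι j) := by simp [lamComp]
        have l1a : lamComp σ ι (wtAt f a) 1 j = wtAt f a (σ (ι j)) := by
          simp [lamComp, hfix]
        have l0n : lamComp σ ι (wtAt f (-a)) 0 j = wtAt f (-a) (ι j) := by simp [lamComp]
        have l1n : lamComp σ ι (wtAt f (-a)) 1 j = wtAt f (-a) (σ (ι j)) := by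
          simp [lamComp, hfix]
        rw [Finset.sum_range_succ, Finset.sum_range_one,
          Finset.sum_range_succ, Finset.sum_range_one,
          c0a, c1a, c0n, c1n, l0a, l1a, l0n, l1n,
          show ((a ^ (if σ (ι j) = ι j then 2 else 1)) = a) by rw [if_neg hfix, pow_one]]
        have hsum1 : wtAt f a (ι j) + wtAt f (-a) (σ (ι j)) = lam j := by
          rw [hva, hvna, hσ2, hemb1]
          have h1 := hge (ι j)
          rw [hemb1] at h1
          have h2 := hle (ι j)
          omega
        have hz1 : wtAt f a (σ (ι j)) = 0 := by
          rw [hva, hemb2 _ (hnr j hfix), hηz j hfix]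
          simp
        have hz2 : wtAt f (-a) (ι j) = 0 := by
          rw [hvna, hηz j hfix]
          simp
        have hxne : ¬ (a⁻¹ = (-a)⁻¹) := fun h => hna (inv_injective h.symm)
        by_cases hx1 : x = a⁻¹
        · subst hx1
          simp only [eq_self_iff_true, if_true, if_neg hxne]
          omega
        · by_cases hx2 : x = (-a)⁻¹
          · subst hx2
            have hxne2 : ¬ ((-a:ℂ)⁻¹ = a⁻¹) := fun h => hna (inv_injective h)
            simp only [eq_self_iff_true, if_true, if_neg hxne2]
            simp [hz1, hz2]
          · simp [hx1, hx2, hz1, hz2]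

end
end

section
/- Let $m=2$ and suppose $\chi_{\boldsymbol\pi} = \chi_{\lambda,a}$ for some $\lambda \in P^+$, $a \in \mathbb{C}^\times$, and $\boldsymbol\pi \in \mathcal{P}$. Then there exists $\tilde{\boldsymbol\pi} \in \mathcal{P}_{\mathrm{Asym}}$ (i.e. the coordinates $b_i$ of $\tilde{\boldsymbol\pi}$ satisfy $b_i^2 \neq b_j^2$ for $i \neq j$) with $\chi_{\tilde{\boldsymbol\pi}} = \chi_{\lambda,a}$ and $\mathbf{r}(\boldsymbol\pi) = \mathbf{r}(\tilde{\boldsymbol\pi})$. -/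
open Polynomial

noncomputable section

variable {I I₀ : Type*}

/-- Choice of representative of the pair {z, -z}, biased towards `a`. -/
private def rep (a : ℂ) (z : ℂ) : ℂ :=
  if z = a ∨ z = -a then a
  else (show ∃ x, x ∈ ({z, -z} : Set ℂ) from ⟨z, Or.inl rfl⟩).choose

private lemma choose_eq_of_set_eq {s t : Set ℂ} (h1 : ∃ x, x ∈ s) (h2 : ∃ x, x ∈ t)
    (h : s = t) : h1.choose = h2.choose := by subst h; rfl

private lemma rep_mem (a z : ℂ) : rep a z = z ∨ rep a z = -z := by
  unfold rep
  split_ifs with h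
  · rcases h with h | h
    · exact Or.inl h.symm
    · exact Or.inr (by rw [h, neg_neg])
  · have := (show ∃ x, x ∈ ({z, -z} : Set ℂ) from ⟨z, Or.inl rfl⟩).choose_spec
    rcases this with h | h
    · exact Or.inl h
    · exact Or.inr h

private lemma rep_neg (a z : ℂ) : rep a (-z) = rep a z := by
  unfold rep
  have hc : ((-z = a ∨ -z = -a)) ↔ (z = a ∨ z = -a) := by
    constructor
    · rintro (h | h)
      · exact Or.inr (by rw [← h, neg_neg])
      · exact Or.inl (neg_injective h)
    · rintro (h | h)
      · exact Or.inr (by rw [h])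
      · exact Or.inl (by rw [h, neg_neg])
  split_ifs with h1 h2 h2
  · rfl
  · exact absurd (hc.mp h1) h2
  · exact absurd (hc.mpr h2) h1
  · exact choose_eq_of_set_eq _ _ (by rw [neg_neg]; exact Set.pair_comm _ _)

private lemma rep_idem (a z : ℂ) : rep a (rep a z) = rep a z := by
  rcases rep_mem a z with h | h
  · rw [h]; exact h
  · rw [h, rep_neg]; exact h

private lemma rep_a (a : ℂ) : rep a a = a := by
  unfold rep; rw [if_pos (Or.inl rfl)]

private lemma onesub_ne (b : ℂ) : (1 - C b * X : Polynomial ℂ) ≠ 0 := by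
  intro h
  have := congrArg (Polynomial.eval 0) h
  simp at this

private lemma rootMult_one (w : ℂ) : (1 : Polynomial ℂ).rootMultiplicity w = 0 := by
  rw [← Polynomial.C_1, Polynomial.rootMultiplicity_C]

private lemma rootMult_prod {α : Type*} (s : Finset α) (g : α → Polynomial ℂ)
    (hg : ∀ b ∈ s, g b ≠ 0) (w : ℂ) :
    ((∏ b ∈ s, g b).rootMultiplicity w) = ∑ b ∈ s, (g b).rootMultiplicity w := by
  classical
  induction s using Finset.induction with
  | empty => simp [rootMult_one]
  | @insert x s hnot ih =>
    have hx : g x ≠ 0 := hg x (Finset.mem_insert_self _ _)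
    have hs : ∀ b ∈ s, g b ≠ 0 := fun b hb => hg b (Finset.mem_insert_of_mem hb)
    have hps : (∏ b ∈ s, g b) ≠ 0 := Finset.prod_ne_zero_iff.mpr hs
    rw [Finset.prod_insert hnot, Polynomial.rootMultiplicity_mul (mul_ne_zero hx hps),
      ih hs, Finset.sum_insert hnot]

private lemma rootMult_pow (p : Polynomial ℂ) (hp : p ≠ 0) (n : ℕ) (w : ℂ) :
    (p ^ n).rootMultiplicity w = n * p.rootMultiplicity w := by
  induction n with
  | zero => simp [rootMult_one]
  | succ n ih =>
    rw [pow_succ, Polynomial.rootMultiplicity_mul (mul_ne_zero (pow_ne_zero _ hp) hp), ih]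
    ring

private lemma rootMult_onesub (b w : ℂ) (hb : b ≠ 0) :
    (1 - C b * X : Polynomial ℂ).rootMultiplicity w = if w = b⁻¹ then 1 else 0 := by
  classical
  have h : (1 - C b * X : Polynomial ℂ) = C (-b) * (X - C b⁻¹) := by
    rw [mul_sub, ← C_mul, neg_mul, mul_inv_cancel₀ hb]
    simp
    ring
  rw [h, Polynomial.rootMultiplicity_mul
      (mul_ne_zero (by simpa using hb : (C (-b) : Polynomial ℂ) ≠ 0) (X_sub_C_ne_zero _)),
    Polynomial.rootMultiplicity_C, Polynomial.rootMultiplicity_X_sub_C, zero_add]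


open scoped Classical in
private lemma mem_invroots {I : Type*} [Fintype I] (g : I → Polynomial ℂ)
    (hg : ∀ i, (g i).coeff 0 = 1) (z : ℂ) :
    (z ∈ (∏ i, g i).roots.toFinset.image fun r => r⁻¹) ↔ wtAt g z ≠ 0 := by
  have hg0 : ∀ i, g i ≠ 0 := by
    intro i h
    have := hg i
    rw [h] at this
    simp at this
  have hP : (∏ i, g i) ≠ 0 := Finset.prod_ne_zero_iff.mpr fun i _ => hg0 i
  have heval0 : Polynomial.eval 0 (∏ i, g i) = 1 := by
    rw [Polynomial.eval_prod]
    rw [Finset.prod_congr rfl (fun i _ => ?_), Finset.prod_const_one]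
    rw [← Polynomial.coeff_zero_eq_eval_zero]; exact hg i
  constructor
  · intro hmem
    rw [Finset.mem_image] at hmem
    obtain ⟨r, hr, rfl⟩ := hmem
    rw [Multiset.mem_toFinset, Polynomial.mem_roots'] at hr
    have hr0 : r ≠ 0 := by
      intro h; rw [h] at hr; exact one_ne_zero (heval0.symm.trans hr.2)
    have : ∃ i, Polynomial.eval r (g i) = 0 := by
      have := hr.2
      rw [Polynomial.IsRoot, Polynomial.eval_prod] at this
      obtain ⟨i, _, hi⟩ := Finset.prod_eq_zero_iff.mp this
      exact ⟨i, hi⟩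
    obtain ⟨i, hi⟩ := this
    intro hw
    have := congrFun hw i
    rw [wtAt] at this
    simp only [inv_inv, Pi.zero_apply] at this
    rw [Polynomial.rootMultiplicity_eq_zero_iff] at this
    exact hg0 i (this hi)
  · intro hw
    obtain ⟨i, hi⟩ := Function.ne_iff.mp hw
    have hpos : 0 < (g i).rootMultiplicity z⁻¹ := Nat.pos_of_ne_zero hi
    have hroot : Polynomial.IsRoot (g i) z⁻¹ :=
      ((Polynomial.rootMultiplicity_pos (hg0 i)).mp hpos)
    have hz0 : z ≠ 0 := by
      intro h
      rw [h, inv_zero] at hroot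
      rw [Polynomial.IsRoot, ← Polynomial.coeff_zero_eq_eval_zero, hg i] at hroot
      exact one_ne_zero hroot
    rw [Finset.mem_image]
    refine ⟨z⁻¹, ?_, inv_inv z⟩
    rw [Multiset.mem_toFinset, Polynomial.mem_roots']
    refine ⟨hP, ?_⟩
    rw [Polynomial.IsRoot, Polynomial.eval_prod]
    exact Finset.prod_eq_zero (Finset.mem_univ i) hroot

open scoped Classical in
private lemma fold_eq_prod {I I₀ : Type*} [Fintype I] (σ : Equiv.Perm I) (ι : I₀ → I)
    (g : I → Polynomial ℂ) (hg : ∀ i, (g i).coeff 0 = 1)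
    (B : Finset ℂ) (hB : ∀ z, wtAt g z ≠ 0 → z ∈ B) (j : I₀) :
    fold 2 (-1 : ℂ) σ ι g j
      = ∏ b ∈ B, ∏ ε ∈ Finset.range 2,
          (1 - C (((-1 : ℂ) ^ ε * b) ^ (if σ (ι j) = ι j then 2 else 1)) * X) ^
            lamComp σ ι (wtAt g b) ε j := by
  rw [fold]
  apply Finset.prod_subset
  · intro z hz
    exact hB z ((mem_invroots g hg z).mp hz)
  · intro z _ hz
    have hw : wtAt g z = 0 := by
      by_contra h; exact hz ((mem_invroots g hg z).mpr h)
    apply Finset.prod_eq_one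
    intro ε _
    have hl : lamComp σ ι (wtAt g z) ε j = 0 := by
      rw [hw]; simp [lamComp]
    rw [hl, pow_zero]

open scoped Classical in
/-- let m = 2 and suppose χ_𝛑 = χ_{λ,a} for some λ ∈ P⁺, a ∈ ℂˣ and
𝛑 ∈ 𝒫.  Then there exists 𝛑̃ ∈ 𝒫_Asym (i.e. the coordinates bᵢ of 𝛑̃ satisfy
bᵢ² ≠ bⱼ² for i ≠ j) with χ_𝛑̃ = χ_{λ,a} and 𝐫(𝛑) = 𝐫(𝛑̃).  The root lattice Q is
required to be stable under the diagram automorphism. -/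
theorem stmt11 {I I₀ : Type*} [Fintype I]
    (σ : Equiv.Perm I) (hσ : σ * σ = 1)
    (ι : I₀ → I) (hinj : Function.Injective ι)
    (horb : ∀ i : I, ∃ j : I₀, i = ι j ∨ i = σ (ι j))
    (hsep : ∀ j j' : I₀, σ (ι j) = ι j' → ι j = ι j')
    (Q : AddSubgroup (I → ℤ)) (hQσ : ∀ v ∈ Q, sw σ v ∈ Q)
    (f : I → Polynomial ℂ) (hf : ∀ i, (f i).coeff 0 = 1)
    (lam : I → ℕ) (a : ℂ) (ha : a ≠ 0)
    (hch : chars Q f = fun z => if z = a then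
        (QuotientAddGroup.mk (fun i => (lam i : ℤ)) : (I → ℤ) ⧸ Q) else 0) :
    ∃ ft : I → Polynomial ℂ,
      (∀ i, (ft i).coeff 0 = 1) ∧
      (∀ b c : ℂ, wtAt ft b ≠ 0 → wtAt ft c ≠ 0 → b ^ 2 = c ^ 2 → b = c) ∧
      chars Q ft = chars Q f ∧
      fold 2 (-1 : ℂ) σ ι ft = fold 2 (-1 : ℂ) σ ι f := by
  classical
  have hσ2 : ∀ i : I, σ (σ i) = i := fun i => by
    rw [← Equiv.Perm.mul_apply, hσ, Equiv.Perm.one_apply]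
  have hσsymm : ∀ i : I, σ.symm i = σ i := fun i =>
    σ.injective (by rw [Equiv.apply_symm_apply, hσ2])
  have hf0 : ∀ i, f i ≠ 0 := by
    intro i h
    have := hf i
    rw [h] at this
    simp at this
  set A : Finset ℂ := (∏ i, f i).roots.toFinset.image (fun r => r⁻¹) with hAdef
  set B : Finset ℂ := A ∪ A.image (fun z => -z) with hBdef
  have hAwt : ∀ z : ℂ, wtAt f z ≠ 0 → z ∈ A := fun z h => (mem_invroots f hf z).mpr h
  have hAwt' : ∀ z : ℂ, z ∉ A → wtAt f z = 0 := by
    intro z hz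
    by_contra h
    exact hz (hAwt z h)
  have hA0 : ∀ z ∈ A, z ≠ 0 := by
    intro z hz h0
    have hne := (mem_invroots f hf z).mp hz
    subst h0
    apply hne
    funext i
    simp only [wtAt, inv_zero, Pi.zero_apply]
    apply Polynomial.rootMultiplicity_eq_zero
    intro hroot
    rw [Polynomial.IsRoot, ← Polynomial.coeff_zero_eq_eval_zero, hf i] at hroot
    exact one_ne_zero hroot
  have hB0 : ∀ z ∈ B, z ≠ 0 := by
    intro z hz
    rw [hBdef, Finset.mem_union] at hz
    rcases hz with hz | hz
    · exact hA0 z hz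
    · rw [Finset.mem_image] at hz
      obtain ⟨y, hy, rfl⟩ := hz
      simpa using hA0 y hy
  have hBneg : ∀ z ∈ B, -z ∈ B := by
    intro z hz
    rw [hBdef, Finset.mem_union] at hz ⊢
    rcases hz with hz | hz
    · exact Or.inr (Finset.mem_image_of_mem _ hz)
    · rw [Finset.mem_image] at hz
      obtain ⟨y, hy, rfl⟩ := hz
      rw [neg_neg]
      exact Or.inl hy
  have hAB : A ⊆ B := Finset.subset_union_left
  set T : Finset ℂ := B.image (rep a) with hTdef
  have hTB : T ⊆ B := by
    intro z hz
    rw [hTdef, Finset.mem_image] at hz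
    obtain ⟨y, hy, rfl⟩ := hz
    rcases rep_mem a y with h | h
    · rw [h]; exact hy
    · rw [h]; exact hBneg y hy
  have hTrep : ∀ z ∈ T, rep a z = z := by
    intro z hz
    rw [hTdef, Finset.mem_image] at hz
    obtain ⟨y, hy, rfl⟩ := hz
    exact rep_idem a y
  have hT0 : ∀ z ∈ T, z ≠ 0 := fun z hz => hB0 z (hTB hz)
  set e : ℂ → I → ℕ := fun z i => wtAt f z i + wtAt f (-z) (σ i) with he
  set ft : I → Polynomial ℂ := fun i => ∏ b ∈ T, (1 - C b * X) ^ e b i with hftdef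
  have hftc : ∀ i, (ft i).coeff 0 = 1 := by
    intro i
    rw [hftdef, Polynomial.coeff_zero_eq_eval_zero, Polynomial.eval_prod]
    rw [Finset.prod_congr rfl (fun b _ => ?_), Finset.prod_const_one]
    simp
  have hwtft : ∀ (z : ℂ) (i : I), wtAt ft z i = if z ∈ T then e z i else 0 := by
    intro z i
    show (ft i).rootMultiplicity z⁻¹ = _
    rw [hftdef]
    rw [rootMult_prod T _ (fun b _ => pow_ne_zero _ (onesub_ne b)) z⁻¹]
    rw [Finset.sum_congr rfl (fun b hb => ?_), Finset.sum_ite_eq' T z (fun b => e b i)]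
    rw [rootMult_pow _ (onesub_ne b) _ z⁻¹, rootMult_onesub b z⁻¹ (hT0 b hb)]
    by_cases hbz : b = z
    · subst hbz
      simp
    · rw [if_neg (fun h => hbz (inv_injective h).symm), if_neg hbz, mul_zero]
  have hwtft0 : ∀ z : ℂ, z ∉ T → wtAt ft z = 0 := by
    intro z hz
    funext i
    rw [hwtft z i, if_neg hz]
    rfl
  refine ⟨ft, hftc, ?_, ?_, ?_⟩
  · -- asymmetry
    intro b c hb hc hbc
    have hbT : b ∈ T := by
      by_contra h
      exact hb (hwtft0 b h)
    have hcT : c ∈ T := by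
      by_contra h
      exact hc (hwtft0 c h)
    have hb0 : b ≠ 0 := hT0 b hbT
    have hcb : c = b ∨ c = -b := by
      have h2 : (c - b) * (c + b) = 0 := by linear_combination -hbc
      rcases mul_eq_zero.mp h2 with h | h
      · exact Or.inl (sub_eq_zero.mp h)
      · exact Or.inr (eq_neg_of_add_eq_zero_left h)
    rcases hcb with h | h
    · exact h.symm
    · exfalso
      have h1 : rep a c = c := hTrep c hcT
      rw [h, rep_neg, hTrep b hbT] at h1
      apply hb0
      have h2 : (2 : ℂ) * b = 0 := by linear_combination h1
      rcases mul_eq_zero.mp h2 with h3 | h3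
      · exact absurd h3 two_ne_zero
      · exact h3
  · -- spectral characters agree
    have key : ∀ w : ℂ, w ≠ a → (fun i => ((f i).rootMultiplicity w⁻¹ : ℤ)) ∈ Q := by
      intro w hw
      have h1 := congrFun hch w
      rw [if_neg hw] at h1
      exact (QuotientAddGroup.eq_zero_iff _).mp h1
    funext z
    show QuotientAddGroup.mk (fun i => ((ft i).rootMultiplicity z⁻¹ : ℤ))
        = QuotientAddGroup.mk (fun i => ((f i).rootMultiplicity z⁻¹ : ℤ))
    by_cases hzT : z ∈ T
    · have hza : -z ≠ a := by
        intro h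
        have h2 : z = -a := by rw [← h, neg_neg]
        have h3 := hTrep z hzT
        rw [h2, rep_neg, rep_a] at h3
        exact ha (by linear_combination h3 / 2)
      have hmem2 : sw σ (fun i => ((f i).rootMultiplicity (-z)⁻¹ : ℤ)) ∈ Q :=
        hQσ _ (key (-z) hza)
      refine (QuotientAddGroup.eq).mpr ?_
      have hdiff : (-(fun i => ((ft i).rootMultiplicity z⁻¹ : ℤ))
            + fun i => ((f i).rootMultiplicity z⁻¹ : ℤ))
          = -(sw σ (fun i => ((f i).rootMultiplicity (-z)⁻¹ : ℤ))) := by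
        funext i
        have h3 : (ft i).rootMultiplicity z⁻¹ = e z i := by
          rw [show (ft i).rootMultiplicity z⁻¹ = wtAt ft z i from rfl, hwtft z i, if_pos hzT]
        simp only [Pi.add_apply, Pi.neg_apply, sw, hσsymm, h3, he, wtAt]
        push_cast
        ring
      rw [hdiff]
      exact neg_mem hmem2
    · have hu : ∀ i, (ft i).rootMultiplicity z⁻¹ = 0 := fun i => by
        rw [show (ft i).rootMultiplicity z⁻¹ = wtAt ft z i from rfl, hwtft z i, if_neg hzT]
      by_cases hza : z = a
      · subst hza
        have hzA : z ∉ A := by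
          intro h
          apply hzT
          have h4 := Finset.mem_image_of_mem (rep z) (hAB h)
          rwa [rep_a z] at h4
        have hv : wtAt f z = 0 := hAwt' z hzA
        have heq : (fun i => ((ft i).rootMultiplicity z⁻¹ : ℤ))
            = (fun i => ((f i).rootMultiplicity z⁻¹ : ℤ)) := by
          funext i
          rw [hu i, show (f i).rootMultiplicity z⁻¹ = wtAt f z i from rfl, hv]
          rfl
        rw [heq]
      · refine (QuotientAddGroup.eq).mpr ?_
        have h0 : (-(fun i => ((ft i).rootMultiplicity z⁻¹ : ℤ))
              + fun i => ((f i).rootMultiplicity z⁻¹ : ℤ))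
            = (fun i => ((f i).rootMultiplicity z⁻¹ : ℤ)) := by
          funext i
          simp [hu i]
        rw [h0]
        exact key z hza
  · -- folds agree
    funext j
    have hBft : ∀ z, wtAt ft z ≠ 0 → z ∈ B := by
      intro z h
      apply hTB
      by_contra hzT
      exact h (hwtft0 z hzT)
    rw [fold_eq_prod σ ι ft hftc B hBft j,
      fold_eq_prod σ ι f hf B (fun z h => hAB (hAwt z h)) j]
    have hmaps : ∀ x ∈ B, rep a x ∈ T := fun x hx => by
      rw [hTdef]; exact Finset.mem_image_of_mem _ hx
    rw [← Finset.prod_fiberwise_of_maps_to hmaps, ← Finset.prod_fiberwise_of_maps_to hmaps]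
    apply Finset.prod_congr rfl
    intro z hz
    have hz0 : z ≠ 0 := hT0 z hz
    have hzneg : z ≠ -z := by
      intro h
      apply hz0
      have h2 : (2 : ℂ) * z = 0 := by linear_combination h
      rcases mul_eq_zero.mp h2 with h3 | h3
      · exact absurd h3 two_ne_zero
      · exact h3
    have hfib : B.filter (fun b => rep a b = z) = {z, -z} := by
      ext b
      simp only [Finset.mem_filter, Finset.mem_insert, Finset.mem_singleton]
      constructor
      · rintro ⟨hbB, hbr⟩
        rcases rep_mem a b with h | h
        · exact Or.inl (by rw [← hbr, h])
        · exact Or.inr (by rw [← hbr, h, neg_neg])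
      · rintro (rfl | rfl)
        · exact ⟨hTB hz, hTrep b hz⟩
        · refine ⟨hBneg z (hTB hz), ?_⟩
          rw [rep_neg]
          exact hTrep z hz
    rw [hfib, Finset.prod_pair hzneg, Finset.prod_pair hzneg]
    have hwz : wtAt ft z = e z := funext fun i => (hwtft z i).trans (if_pos hz)
    have hnzT : -z ∉ T := by
      intro h
      have h1 := hTrep _ h
      rw [rep_neg, hTrep z hz] at h1
      exact hzneg h1
    have hwnz : wtAt ft (-z) = 0 := hwtft0 _ hnzT
    rw [hwz, hwnz]
    simp only [Finset.prod_range_succ, Finset.prod_range_one]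
    by_cases hfix : σ (ι j) = ι j
    · simp only [lamComp, he]
      simp [hfix, hσ2, pow_add, neg_sq]
    · simp only [lamComp, he]
      simp [hfix, hσ2, pow_add]
      ring
end
end

section
/- Let $m = 3$ (type $D_4$), $\lambda, \mu, \gamma \in P^+_\sigma$, and $\eta, \nu \in P$ satisfying $\eta + \nu \in P^+ - \lambda$, $\sigma^2(\eta) \in P^- + \mu$, $\sigma(\nu) \in P^- + \gamma$. Then $\mathbf{r}(\boldsymbol\pi_{\lambda+\eta+\nu, a}\, \boldsymbol\pi_{\mu - \sigma^2(\eta), \zeta a}\, \boldsymbol\pi_{\gamma - \sigma(\nu), \zeta^2 a}) = \boldsymbol\pi^\sigma_{\lambda, a}\, \boldsymbol\pi^\sigma_{\mu, \zeta a}\, \boldsymbol\pi^\sigma_{\gamma, \zeta^2 a}$. -/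
open Polynomial

noncomputable section

variable {I I₀ : Type*}

/-- The embedding of the set I₀ of σ-orbit representatives of the D₄ diagram into
its node set: node 1 (index 0) represents the triality orbit {1,3,4} and node 2
(index 1) is the fixed node. -/
def iotaD4 : Fin 2 → Fin 4 := ![0, 1]

/- ### auxiliary lemmas -/

lemma lin_ne_zero (c : ℂ) : (1 - C c * X : ℂ[X]) ≠ 0 := by
  intro h; have := congrArg (eval 0) h; simp at this

lemma lin_roots (c : ℂ) (hc : c ≠ 0) : (1 - C c * X : ℂ[X]).roots = {c⁻¹} := by
  have h : (1 - C c * X : ℂ[X]) = C (-c) * (X - C c⁻¹) := by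
    rw [mul_sub, ← C_mul, neg_mul, mul_inv_cancel₀ hc]; simp; ring
  rw [h, roots_C_mul _ (neg_ne_zero.2 hc), roots_X_sub_C]

/-- let m = 3 (type D₄ with triality σ, σ(1) = 3, σ(3) = 4,
σ(4) = 1, σ(2) = 2, in node indices 0-based: σ 0 = 2, σ 2 = 3, σ 3 = 0, σ 1 = 1),
λ, μ, γ ∈ P⁺_σ, and η, ν ∈ P with η + ν ∈ P⁺ - λ, σ²(η) ∈ P⁻ + μ,
σ(ν) ∈ P⁻ + γ.  Then
𝐫(𝛑_{λ+η+ν,a} 𝛑_{μ-σ²(η),ζa} 𝛑_{γ-σ(ν),ζ²a}) = 𝛑^σ_{λ,a} 𝛑^σ_{μ,ζa} 𝛑^σ_{γ,ζ²a}. -/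
theorem stmt17 (σ : Equiv.Perm (Fin 4))
    (hσ0 : σ 0 = 2) (hσ2 : σ 2 = 3) (hσ3 : σ 3 = 0) (hσ1 : σ 1 = 1)
    (ζ a : ℂ) (hζ : IsPrimitiveRoot ζ 3) (ha : a ≠ 0)
    (lam mu gam : Fin 2 → ℕ) (η ν : Fin 4 → ℤ)
    (h₁ : ∀ i, 0 ≤ embwt iotaD4 lam i + η i + ν i)
    (h₂ : ∀ i, sw (σ ^ 2) η i ≤ embwt iotaD4 mu i)
    (h₃ : ∀ i, sw σ ν i ≤ embwt iotaD4 gam i) :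
    fold 3 ζ σ iotaD4
        (piLamZ (fun i => embwt iotaD4 lam i + η i + ν i) a *
          piLamZ (fun i => embwt iotaD4 mu i - sw (σ ^ 2) η i) (ζ * a) *
          piLamZ (fun i => embwt iotaD4 gam i - sw σ ν i) (ζ ^ 2 * a))
      = piSig 3 σ iotaD4 lam a * piSig 3 σ iotaD4 mu (ζ * a) *
          piSig 3 σ iotaD4 gam (ζ ^ 2 * a) := by
  classical
  -- abbreviations
  set v1 : Fin 4 → ℤ := fun i => embwt iotaD4 lam i + η i + ν i with hv1
  set v2 : Fin 4 → ℤ := fun i => embwt iotaD4 mu i - sw (σ ^ 2) η i with hv2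
  set v3 : Fin 4 → ℤ := fun i => embwt iotaD4 gam i - sw σ ν i with hv3
  set f : Fin 4 → ℂ[X] :=
    piLamZ v1 a * piLamZ v2 (ζ * a) * piLamZ v3 (ζ ^ 2 * a) with hf
  -- basic facts about ζ and a
  have hζ3 : ζ ^ 3 = 1 := hζ.pow_eq_one
  have hζ0 : ζ ≠ 0 := hζ.ne_zero (by norm_num)
  have hζ1 : ζ ≠ 1 := hζ.ne_one (by norm_num)
  have hζ21 : ζ ^ 2 ≠ 1 := hζ.pow_ne_one_of_pos_of_lt (by norm_num) (by norm_num)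
  have hζζ2 : ζ ≠ ζ ^ 2 := by
    intro h
    have : ζ * 1 = ζ * ζ := by rw [mul_one]; rw [pow_two] at h; exact h
    exact hζ1 ((mul_left_cancel₀ hζ0 this).symm)
  have c2ne : ζ * a ≠ 0 := mul_ne_zero hζ0 ha
  have c3ne : ζ ^ 2 * a ≠ 0 := mul_ne_zero (pow_ne_zero 2 hζ0) ha
  have cancel : ∀ x y : ℂ, x * a = y * a → x = y := fun x y h => mul_right_cancel₀ ha h
  have d12 : a ≠ ζ * a := by
    intro h; exact hζ1 (cancel ζ 1 (by rw [one_mul]; exact h.symm))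
  have d13 : a ≠ ζ ^ 2 * a := by
    intro h; exact hζ21 (cancel (ζ ^ 2) 1 (by rw [one_mul]; exact h.symm))
  have d23 : ζ * a ≠ ζ ^ 2 * a := by
    intro h; exact hζζ2 (cancel ζ (ζ ^ 2) h)
  have inv_ne : ∀ x y : ℂ, x ≠ y → x⁻¹ ≠ y⁻¹ := fun x y h h' => h (by
    rw [← inv_inv x, h', inv_inv])
  -- nonnegativity
  have hv1n : ∀ i, 0 ≤ v1 i := h₁
  have hv2n : ∀ i, 0 ≤ v2 i := fun i => by simp [hv2, sub_nonneg]; exact h₂ i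
  have hv3n : ∀ i, 0 ≤ v3 i := fun i => by simp [hv3, sub_nonneg]; exact h₃ i
  -- components of f and their roots
  have hfi : ∀ i, f i = (1 - C a * X) ^ (v1 i).toNat * (1 - C (ζ * a) * X) ^ (v2 i).toNat *
      (1 - C (ζ ^ 2 * a) * X) ^ (v3 i).toNat := fun i => rfl
  have hfine : ∀ i, f i ≠ 0 := fun i => by
    rw [hfi i]
    exact mul_ne_zero (mul_ne_zero (pow_ne_zero _ (lin_ne_zero a))
      (pow_ne_zero _ (lin_ne_zero _))) (pow_ne_zero _ (lin_ne_zero _))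
  have hfroots : ∀ i, (f i).roots =
      (v1 i).toNat • ({a⁻¹} : Multiset ℂ) + (v2 i).toNat • {(ζ * a)⁻¹} +
        (v3 i).toNat • {(ζ ^ 2 * a)⁻¹} := by
    intro i
    rw [hfi i, roots_mul (by rw [← hfi i]; exact hfine i),
      roots_mul (mul_ne_zero (pow_ne_zero _ (lin_ne_zero a)) (pow_ne_zero _ (lin_ne_zero _))),
      roots_pow, roots_pow, roots_pow, lin_roots a ha, lin_roots _ c2ne, lin_roots _ c3ne]
  -- weights at the three spectral parameters
  have count_eval : ∀ (x r1 r2 r3 : ℂ) (n1 n2 n3 : ℕ),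
      Multiset.count x (n1 • ({r1} : Multiset ℂ) + n2 • {r2} + n3 • {r3}) =
        n1 * (if x = r1 then 1 else 0) + n2 * (if x = r2 then 1 else 0) +
          n3 * (if x = r3 then 1 else 0) := by
    intro x r1 r2 r3 n1 n2 n3
    simp [Multiset.count_nsmul, Multiset.count_singleton]
  have hw1 : wtAt f a = fun i => (v1 i).toNat := by
    funext i
    show (f i).rootMultiplicity a⁻¹ = _
    rw [← count_roots, hfroots i, count_eval,
      if_pos rfl, if_neg (inv_ne _ _ d12), if_neg (inv_ne _ _ d13)]
    simp
  have hw2 : wtAt f (ζ * a) = fun i => (v2 i).toNat := by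
    funext i
    show (f i).rootMultiplicity (ζ * a)⁻¹ = _
    rw [← count_roots, hfroots i, count_eval,
      if_neg (inv_ne _ _ d12.symm), if_pos rfl, if_neg (inv_ne _ _ d23)]
    simp
  have hw3 : wtAt f (ζ ^ 2 * a) = fun i => (v3 i).toNat := by
    funext i
    show (f i).rootMultiplicity (ζ ^ 2 * a)⁻¹ = _
    rw [← count_roots, hfroots i, count_eval,
      if_neg (inv_ne _ _ d13.symm), if_neg (inv_ne _ _ d23.symm), if_pos rfl]
    simp
  -- the set of inverse roots
  have hprodne : (∏ i, f i) ≠ 0 := Finset.prod_ne_zero_iff.2 fun i _ => hfine i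
  have hmemroots : ∀ r : ℂ, r ∈ (∏ i, f i).roots → r = a⁻¹ ∨ r = (ζ * a)⁻¹ ∨ r = (ζ ^ 2 * a)⁻¹ := by
    intro r hr
    rw [roots_prod _ _ hprodne, Multiset.mem_bind] at hr
    obtain ⟨i, -, hri⟩ := hr
    rw [hfroots i] at hri
    rcases Multiset.mem_add.1 hri with h | h
    · rcases Multiset.mem_add.1 h with h | h
      · exact Or.inl (Multiset.mem_singleton.1 (Multiset.mem_nsmul.1 h).2)
      · exact Or.inr (Or.inl (Multiset.mem_singleton.1 (Multiset.mem_nsmul.1 h).2))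
    · exact Or.inr (Or.inr (Multiset.mem_singleton.1 (Multiset.mem_nsmul.1 h).2))
  set S : Finset ℂ := ((∏ i, f i).roots.toFinset.image fun r => r⁻¹) with hSdef
  set T : Finset ℂ := {a, ζ * a, ζ ^ 2 * a} with hTdef
  have hST : S ⊆ T := by
    intro b hb
    rw [hSdef, Finset.mem_image] at hb
    obtain ⟨r, hr, rfl⟩ := hb
    rcases hmemroots r (Multiset.mem_toFinset.1 hr) with h | h | h <;>
      rw [h, inv_inv] <;> simp [hTdef]
  have hTnotS : ∀ b ∈ T, b ∉ S → wtAt f b = 0 := by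
    intro b _ hbS
    funext i
    by_contra hne
    have hroot : b⁻¹ ∈ (f i).roots := by
      rw [mem_roots (hfine i)]
      exact (rootMultiplicity_pos (hfine i)).1 (Nat.pos_of_ne_zero hne)
    have : b⁻¹ ∈ (∏ i, f i).roots := by
      rw [roots_prod _ _ hprodne, Multiset.mem_bind]
      exact ⟨i, Finset.mem_univ i, hroot⟩
    exact hbS (Finset.mem_image.2 ⟨b⁻¹, Multiset.mem_toFinset.2 this, inv_inv b⟩)
  -- evaluation of embwt
  have hinj : Function.Injective iotaD4 := by decide
  have hemb : ∀ (k : Fin 2 → ℕ), embwt iotaD4 k 0 = k 0 ∧ embwt iotaD4 k 1 = k 1 ∧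
      embwt iotaD4 k 2 = 0 ∧ embwt iotaD4 k 3 = 0 := by
    intro k
    refine ⟨?_, ?_, ?_, ?_⟩
    · have : (0 : Fin 4) = iotaD4 0 := rfl
      rw [embwt, this, hinj.extend_apply]
    · have : (1 : Fin 4) = iotaD4 1 := rfl
      rw [embwt, this, hinj.extend_apply]
    · rw [embwt, Function.extend_apply' _ _ _ (by decide)]
    · rw [embwt, Function.extend_apply' _ _ _ (by decide)]
  -- symm values
  have s0 : σ.symm 0 = 3 := by rw [Equiv.symm_apply_eq, hσ3]
  have s1 : σ.symm 1 = 1 := by rw [Equiv.symm_apply_eq, hσ1]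
  have s2 : σ.symm 2 = 0 := by rw [Equiv.symm_apply_eq, hσ0]
  have s3 : σ.symm 3 = 2 := by rw [Equiv.symm_apply_eq, hσ2]
  have sq : ∀ x, (σ ^ 2).symm x = σ.symm (σ.symm x) := by
    intro x; rw [pow_two]; rfl
  -- values of v's
  have he1 := hemb lam; have he2 := hemb mu; have he3 := hemb gam
  have hv10 : v1 0 = (lam 0 : ℤ) + η 0 + ν 0 := by simp [hv1, he1.1]
  have hv11 : v1 1 = (lam 1 : ℤ) + η 1 + ν 1 := by simp [hv1, he1.2.1]
  have hv12 : v1 2 = η 2 + ν 2 := by simp [hv1, he1.2.2.1]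
  have hv13 : v1 3 = η 3 + ν 3 := by simp [hv1, he1.2.2.2]
  have hv20 : v2 0 = (mu 0 : ℤ) - η 2 := by
    simp [hv2, sw, he2.1, sq, s0, s3]
  have hv21 : v2 1 = (mu 1 : ℤ) - η 1 := by
    simp [hv2, sw, he2.2.1, sq, s1]
  have hv22 : v2 2 = - η 3 := by
    simp [hv2, sw, he2.2.2.1, sq, s2, s0]
  have hv23 : v2 3 = - η 0 := by
    simp [hv2, sw, he2.2.2.2, sq, s3, s2]
  have hv30 : v3 0 = (gam 0 : ℤ) - ν 3 := by simp [hv3, sw, he3.1, s0]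
  have hv31 : v3 1 = (gam 1 : ℤ) - ν 1 := by simp [hv3, sw, he3.2.1, s1]
  have hv32 : v3 2 = - ν 0 := by simp [hv3, sw, he3.2.2.1, s2]
  have hv33 : v3 3 = - ν 2 := by simp [hv3, sw, he3.2.2.2, s3]
  -- powers of σ at node 0
  have hiota0 : iotaD4 0 = 0 := rfl
  have hiota1 : iotaD4 1 = 1 := rfl
  have hp0 : (σ ^ 0) (iotaD4 0) = 0 := rfl
  have hp1 : (σ ^ 1) (iotaD4 0) = 2 := by rw [hiota0, pow_one, hσ0]
  have hp2 : (σ ^ 2) (0 : Fin 4) = 3 := by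
    rw [pow_two, Equiv.Perm.mul_apply, hσ0, hσ2]
  have hfix0 : ¬ σ (iotaD4 0) = iotaD4 0 := by
    show ¬ σ 0 = 0; rw [hσ0]; decide
  have hfix1 : σ (iotaD4 1) = iotaD4 1 := hσ1
  -- lamComp values
  have hlc0 : ∀ (w : Fin 4 → ℕ) (ε : ℕ), lamComp σ iotaD4 w ε 0 = w ((σ ^ ε) (iotaD4 0)) := by
    intro w ε
    rw [lamComp, if_neg (fun h => hfix0 h.2)]
  have hlc1 : ∀ (w : Fin 4 → ℕ), lamComp σ iotaD4 w 0 1 = w (iotaD4 1) := by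
    intro w
    rw [lamComp, if_neg (fun h => h.1 rfl), pow_zero]
    rfl
  have hlc1' : ∀ (w : Fin 4 → ℕ) (ε : ℕ), ε ≠ 0 → lamComp σ iotaD4 w ε 1 = 0 := by
    intro w ε hε
    rw [lamComp, if_pos ⟨hε, hfix1⟩]
  have hTa : (a : ℂ) ∉ ({ζ * a, ζ ^ 2 * a} : Finset ℂ) := by
    simp [d12, d13]
  have hTb : (ζ * a : ℂ) ∉ ({ζ ^ 2 * a} : Finset ℂ) := by simp [d23]
  -- rewrite fold as product over T
  have hfold : ∀ g : ℂ → Polynomial ℂ, (∀ b ∈ T, b ∉ S → g b = 1) →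
      ∏ b ∈ S, g b = ∏ b ∈ T, g b := fun g hg => Finset.prod_subset hST hg
  have hlczero : ∀ (ε : ℕ) (j : Fin 2), lamComp σ iotaD4 (0 : Fin 4 → ℕ) ε j = 0 := by
    intro ε j; rw [lamComp]; split <;> rfl
  funext j
  simp only [fold]
  rw [← hSdef]
  rw [hfold _ (fun b hbT hbS => by
    rw [hTnotS b hbT hbS]
    exact Finset.prod_eq_one fun ε _ => by rw [hlczero, pow_zero])]
  rw [hTdef]
  rw [show ({a, ζ * a, ζ ^ 2 * a} : Finset ℂ) = insert a (insert (ζ * a) {ζ ^ 2 * a}) from rfl,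
    Finset.prod_insert hTa, Finset.prod_insert hTb, Finset.prod_singleton]
  have hj : j = 0 ∨ j = 1 := by fin_cases j <;> simp
  rcases hj with rfl | rfl
  · -- node 0
    simp only [hw1, hw2, hw3, hlc0, Finset.prod_range_succ, Finset.prod_range_zero, one_mul,
      pow_zero, pow_one, Equiv.Perm.one_apply, hiota0, hσ0, hp2, Pi.mul_apply, piSig]
    simp only [if_neg (show ¬((2 : Fin 4) = 0) from by decide), pow_one]
    have rA : ζ * (ζ * a) = ζ ^ 2 * a := by ring
    have rB : ζ ^ 2 * (ζ * a) = a := by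
      have h : ζ ^ 2 * (ζ * a) = ζ ^ 3 * a := by ring
      rw [h, hζ3, one_mul]
    have rC : ζ * (ζ ^ 2 * a) = a := by
      have h : ζ * (ζ ^ 2 * a) = ζ ^ 3 * a := by ring
      rw [h, hζ3, one_mul]
    have rD : ζ ^ 2 * (ζ ^ 2 * a) = ζ * a := by
      have h : ζ ^ 2 * (ζ ^ 2 * a) = ζ ^ 3 * (ζ * a) := by ring
      rw [h, hζ3, one_mul]
    rw [rA, rB, rC, rD]
    have e1 : (v1 0).toNat + (v2 3).toNat + (v3 2).toNat = lam 0 := by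
      have a1 := hv1n 0; have a2 := hv2n 3; have a3 := hv3n 2
      rw [hv10] at a1 ⊢; rw [hv23] at a2 ⊢; rw [hv32] at a3 ⊢
      omega
    have e2 : (v1 2).toNat + (v2 0).toNat + (v3 3).toNat = mu 0 := by
      have a1 := hv1n 2; have a2 := hv2n 0; have a3 := hv3n 3
      rw [hv12] at a1 ⊢; rw [hv20] at a2 ⊢; rw [hv33] at a3 ⊢
      omega
    have e3 : (v1 3).toNat + (v2 2).toNat + (v3 0).toNat = gam 0 := by
      have a1 := hv1n 3; have a2 := hv2n 2; have a3 := hv3n 0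
      rw [hv13] at a1 ⊢; rw [hv22] at a2 ⊢; rw [hv30] at a3 ⊢
      omega
    rw [← e1, ← e2, ← e3]
    ring
  · -- node 1
    simp only [hw1, hw2, hw3, Finset.prod_range_succ, Finset.prod_range_zero, one_mul,
      Pi.mul_apply, piSig]
    rw [hlc1, hlc1' _ 1 one_ne_zero, hlc1' _ 2 two_ne_zero,
      hlc1, hlc1' _ 1 one_ne_zero, hlc1' _ 2 two_ne_zero,
      hlc1, hlc1' _ 1 one_ne_zero, hlc1' _ 2 two_ne_zero]
    simp only [pow_zero, mul_one, one_mul, hiota1]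
    simp only [if_pos hσ1]
    have q4 : (ζ * a) ^ 3 = a ^ 3 := by
      have h : (ζ * a) ^ 3 = ζ ^ 3 * a ^ 3 := by ring
      rw [h, hζ3, one_mul]
    have q5 : (ζ ^ 2 * a) ^ 3 = a ^ 3 := by
      have h : (ζ ^ 2 * a) ^ 3 = (ζ ^ 3) ^ 2 * a ^ 3 := by ring
      rw [h, hζ3, one_pow, one_mul]
    rw [q4, q5]
    have e : (v1 1).toNat + (v2 1).toNat + (v3 1).toNat = lam 1 + mu 1 + gam 1 := by
      have a1 := hv1n 1; have a2 := hv2n 1; have a3 := hv3n 1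
      rw [hv11] at a1 ⊢; rw [hv21] at a2 ⊢; rw [hv31] at a3 ⊢
      omega
    rw [show ((1 - C (a ^ 3) * X : ℂ[X]) ^ (v1 1).toNat *
        ((1 - C (a ^ 3) * X) ^ (v2 1).toNat * (1 - C (a ^ 3) * X) ^ (v3 1).toNat)) =
        (1 - C (a ^ 3) * X) ^ ((v1 1).toNat + (v2 1).toNat + (v3 1).toNat) from by ring, e]
    ring


end
end
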